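/- arXiv:1107.3946 — 7 statements merged into one kernel-verified Lean document; each statement's English description precedes it below -/
import Mathlib

section
/- Let λ be an infinite type. Every complete algebraic lattice L with at most 2^#λ compact elements admits an injective map Φ from L into the lattice of submonoids of the symmetric group Equiv.Perm λ (submonoids under composition, not necessarily subgroups) such that Φ preserves all nonempty suprema and all nonempty infima, and moreover Φ maps the smallest element of L to the trivial submonoid consisting only of the identity permutation. -/
universe u

attribute [local instance] Classical.propDecidable

namespace PermMonUniversal

open CompleteLattice

variable {L : Type u} [CompleteLattice L]

abbrev Kc (L : Type u) [CompleteLattice L] := {c : L // IsCompactElement c}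

inductive Ltr (L : Type u) [CompleteLattice L] : Type u
  | root : Kc L → Ltr L
  | y : Ltr L → Kc L → Kc L → Ltr L
  | z : Ltr L → Kc L → Kc L → Ltr L

namespace Ltr

def val : Ltr L → L
  | .root c => c
  | .y _ a _ => a
  | .z _ _ b => b

def Valid : Ltr L → Prop
  | .root c => (c : L) ≠ ⊥
  | .y x a b => x.Valid ∧ (a : L) ≠ ⊥ ∧ (b : L) ≠ ⊥ ∧ x.val ≤ (a : L) ⊔ (b : L)
  | .z x a b => x.Valid ∧ (a : L) ≠ ⊥ ∧ (b : L) ≠ ⊥ ∧ x.val ≤ (a : L) ⊔ (b : L)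

theorem val_isCompact (ℓ : Ltr L) : IsCompactElement ℓ.val := by
  cases ℓ with
  | root c => exact c.2
  | y x a b => exact a.2
  | z x a b => exact b.2

theorem val_ne_bot {ℓ : Ltr L} (h : ℓ.Valid) : ℓ.val ≠ ⊥ := by
  cases ℓ with
  | root c => exact h
  | y x a b => exact h.2.1
  | z x a b => exact h.2.2.1

def size : Ltr L → ℕ
  | .root _ => 1
  | .y x _ _ => x.size + 1
  | .z x _ _ => x.size + 1

def idx : Ltr L → Multiset (Ltr L × Kc L × Kc L)
  | .root _ => 0
  | .y x a b => {(x, a, b)}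
  | .z x a b => (x, a, b) ::ₘ x.idx

def base : Ltr L → (Kc L ⊕ (Ltr L × Kc L × Kc L))
  | .root c => Sum.inl c
  | .y x a b => Sum.inr (x, a, b)
  | .z x _ _ => x.base

theorem size_lt_of_mem_idx : ∀ {ℓ : Ltr L} {p : Ltr L × Kc L × Kc L},
    p ∈ ℓ.idx → p.1.size < ℓ.size := by
  intro ℓ
  induction ℓ with
  | root c => intro p hp; simp [idx] at hp
  | y x a b ih => intro p hp; simp [idx] at hp; subst hp; simp [size]
  | z x a b ih =>
      intro p hp
      rw [idx, Multiset.mem_cons] at hp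
      rcases hp with h | h
      · subst h; simp [size]
      · exact (ih h).trans (by simp [size])

end Ltr

abbrev Bs (L : Type u) [CompleteLattice L] := Kc L ⊕ (Ltr L × Kc L × Kc L)

abbrev Q (L : Type u) [CompleteLattice L] := Bs L →₀ ℤ

namespace Ltr

noncomputable def em : Ltr L → Q L
  | .root c => Finsupp.single (Sum.inl c) 1
  | .y x a b => Finsupp.single (Sum.inr (x, a, b)) 1
  | .z x a b => x.em - Finsupp.single (Sum.inr (x, a, b)) 1

theorem em_y_add_em_z (x : Ltr L) (a b : Kc L) :
    (Ltr.y x a b).em + (Ltr.z x a b).em = x.em := by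
  simp [em]

theorem em_apply_inl (ℓ : Ltr L) (c : Kc L) :
    ℓ.em (Sum.inl c) = if ℓ.base = Sum.inl c then 1 else 0 := by
  induction ℓ with
  | root c' => simp [em, base, Finsupp.single_apply]
  | y x a b ih => simp [em, base, Finsupp.single_apply]
  | z x a b ih => simp [em, base, Finsupp.single_apply, ih]; congr

theorem em_apply_inr_of_not_mem {ℓ : Ltr L} {p : Ltr L × Kc L × Kc L} (hp : p ∉ ℓ.idx) :
    ℓ.em (Sum.inr p) = 0 := by
  induction ℓ with
  | root c => simp [em, Finsupp.single_apply]
  | y x a b ih =>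
      simp only [idx, Multiset.mem_singleton] at hp
      simp only [em, Finsupp.single_apply]
      rw [if_neg]
      intro h
      exact hp (by simpa using h.symm)
  | z x a b ih =>
      rw [idx, Multiset.mem_cons] at hp
      push_neg at hp
      have h1 := ih hp.2
      simp [em, h1, Finsupp.single_apply]
      intro h; exact absurd h.symm hp.1

theorem em_apply_inr_max {ℓ : Ltr L} {p : Ltr L × Kc L × Kc L}
    (hmax : ∀ q ∈ ℓ.idx, q.1.size ≤ p.1.size) :
    ℓ.em (Sum.inr p) = (if ℓ = Ltr.y p.1 p.2.1 p.2.2 then 1 else 0)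
      - (if ℓ = Ltr.z p.1 p.2.1 p.2.2 then 1 else 0) := by
  obtain ⟨px, pa, pb⟩ := p
  cases ℓ with
  | root c => simp [em, Finsupp.single_apply]
  | y x a b =>
      simp only [em, Finsupp.single_apply]
      by_cases h : x = px ∧ a = pa ∧ b = pb
      · obtain ⟨h1, h2, h3⟩ := h; subst h1; subst h2; subst h3; simp
      · have h1 : ¬ (Sum.inr (x, a, b) : Bs L) = Sum.inr (px, pa, pb) := by
          simp only [Sum.inr.injEq, Prod.mk.injEq]; tauto
        have h2 : ¬ (Ltr.y x a b = Ltr.y px pa pb) := by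
          intro hh; cases hh; tauto
        simp [h1, h2]
  | z x a b =>
      have hxn : (px, pa, pb) ∉ x.idx := by
        intro hmem
        have h1 : px.size < x.size := size_lt_of_mem_idx hmem
        have h2 : x.size ≤ px.size := hmax (x, a, b) (by simp [idx])
        omega
      have h0 : x.em (Sum.inr (px, pa, pb)) = 0 := em_apply_inr_of_not_mem hxn
      simp only [em, Finsupp.sub_apply, Finsupp.single_apply, h0]
      by_cases h : x = px ∧ a = pa ∧ b = pb
      · obtain ⟨h1, h2, h3⟩ := h; subst h1; subst h2; subst h3; simp
      · have h1 : ¬ (Sum.inr (x, a, b) : Bs L) = Sum.inr (px, pa, pb) := by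
          simp only [Sum.inr.injEq, Prod.mk.injEq]; tauto
        have h2 : ¬ (Ltr.z x a b = Ltr.z px pa pb) := by
          intro hh; cases hh; tauto
        simp [h1, h2]

theorem eq_y_or_z_of_mem_idx_max {ℓ : Ltr L} {p : Ltr L × Kc L × Kc L}
    (hp : p ∈ ℓ.idx) (hmax : ∀ q ∈ ℓ.idx, q.1.size ≤ p.1.size) :
    ℓ = Ltr.y p.1 p.2.1 p.2.2 ∨ ℓ = Ltr.z p.1 p.2.1 p.2.2 := by
  obtain ⟨px, pa, pb⟩ := p
  cases ℓ with
  | root c => simp [idx] at hp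
  | y x a b =>
      simp only [idx, Multiset.mem_singleton] at hp
      left; rw [hp]
  | z x a b =>
      rw [idx, Multiset.mem_cons] at hp
      rcases hp with h | h
      · right; rw [h]
      · exfalso
        have h1 : px.size < x.size := size_lt_of_mem_idx h
        have h2 : x.size ≤ px.size := hmax (x, a, b) (by simp [idx])
        omega

end Ltr

noncomputable def lsum (S : Multiset (Ltr L)) : Q L := (S.map Ltr.em).sum

theorem lsum_zero : lsum (0 : Multiset (Ltr L)) = 0 := rfl

theorem lsum_cons (ℓ : Ltr L) (S : Multiset (Ltr L)) : lsum (ℓ ::ₘ S) = ℓ.em + lsum S := by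
  simp [lsum]

theorem lsum_apply (S : Multiset (Ltr L)) (pt : Bs L) :
    lsum S pt = (S.map (fun ℓ => ℓ.em pt)).sum := by
  induction S using Multiset.induction_on with
  | empty => simp [lsum]
  | cons a s ih => simp [lsum_cons, ih]

theorem sum_ite_count (S : Multiset (Ltr L)) (a : Ltr L) :
    (S.map (fun ℓ => if ℓ = a then (1 : ℤ) else 0)).sum = S.count a := by
  induction S using Multiset.induction_on with
  | empty => simp
  | cons b s ih =>
      simp only [Multiset.map_cons, Multiset.sum_cons, ih, Multiset.count_cons]
      by_cases h : b = a
      · subst h; simp [add_comm]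
      · rw [if_neg h, if_neg (fun hh => h hh.symm)]; push_cast; ring

theorem lsum_apply_inr_max {S : Multiset (Ltr L)} {p : Ltr L × Kc L × Kc L}
    (hmax : ∀ ℓ ∈ S, ∀ q ∈ Ltr.idx ℓ, q.1.size ≤ p.1.size) :
    lsum S (Sum.inr p) =
      (S.count (Ltr.y p.1 p.2.1 p.2.2) : ℤ) - (S.count (Ltr.z p.1 p.2.1 p.2.2) : ℤ) := by
  rw [lsum_apply]
  have hcong : S.map (fun ℓ => ℓ.em (Sum.inr p)) =
      S.map (fun ℓ => (if ℓ = Ltr.y p.1 p.2.1 p.2.2 then (1 : ℤ) else 0)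
        - (if ℓ = Ltr.z p.1 p.2.1 p.2.2 then (1 : ℤ) else 0)) := by
    apply Multiset.map_congr rfl
    intro ℓ hℓ
    exact Ltr.em_apply_inr_max (hmax ℓ hℓ)
  rw [hcong]
  have hsub : ∀ (f g : Ltr L → ℤ) (S : Multiset (Ltr L)),
      (S.map (fun ℓ => f ℓ - g ℓ)).sum = (S.map f).sum - (S.map g).sum := by
    intro f g S
    induction S using Multiset.induction_on with
    | empty => simp
    | cons a s ih => simp only [Multiset.map_cons, Multiset.sum_cons, ih]; ring
  rw [hsub, sum_ite_count, sum_ite_count]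

def Irred (S : Multiset (Ltr L)) : Prop :=
  ∀ x a b, ¬(Ltr.y x a b ∈ S ∧ Ltr.z x a b ∈ S)

theorem Irred.mono {S T : Multiset (Ltr L)} (h : S ≤ T) (hT : Irred T) : Irred S := by
  intro x a b hx
  exact hT x a b ⟨Multiset.mem_of_le h hx.1, Multiset.mem_of_le h hx.2⟩

theorem y_ne_z (x x' : Ltr L) (a b a' b' : Kc L) : Ltr.y x a b ≠ Ltr.z x' a' b' := by
  intro h; cases h

/-- reduction to an irreducible multiset -/
theorem reduce (t : L) : ∀ (n : ℕ) (S : Multiset (Ltr L)), S.card ≤ n →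
    (∀ ℓ ∈ S, ℓ.Valid ∧ ℓ.val ≤ t) →
    ∃ T, Irred T ∧ lsum T = lsum S ∧ ∀ ℓ ∈ T, ℓ.Valid ∧ ℓ.val ≤ t := by
  intro n
  induction n with
  | zero =>
      intro S hcard hS
      refine ⟨S, ?_, rfl, hS⟩
      have : S = 0 := Multiset.card_eq_zero.mp (Nat.le_zero.mp hcard)
      subst this
      intro x a b h; exact absurd h.1 (by simp)
  | succ n ih =>
      intro S hcard hS
      by_cases hirr : Irred S
      · exact ⟨S, hirr, rfl, hS⟩
      · simp only [Irred, not_forall, not_not] at hirr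
        obtain ⟨x, a, b, hy, hz⟩ := hirr
        have hzy : Ltr.z x a b ∈ S.erase (Ltr.y x a b) :=
          (Multiset.mem_erase_of_ne (Ne.symm (y_ne_z x x a b a b))).mpr hz
        set S₀ := (S.erase (Ltr.y x a b)).erase (Ltr.z x a b) with hS₀
        have e1 : S.erase (Ltr.y x a b) = Ltr.z x a b ::ₘ S₀ := (Multiset.cons_erase hzy).symm
        have e2 : S = Ltr.y x a b ::ₘ Ltr.z x a b ::ₘ S₀ := by
          rw [← e1, Multiset.cons_erase hy]
        have hsub : S₀ ≤ S := le_trans (Multiset.erase_le _ _) (Multiset.erase_le _ _)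
        have hcard' : (x ::ₘ S₀).card ≤ n := by
          have : S.card = S₀.card + 2 := by rw [e2]; simp
          simp only [Multiset.card_cons]
          omega
        have hy' := hS _ hy
        have hz' := hS _ hz
        have hxval : x.val ≤ t := by
          refine le_trans hy'.1.2.2.2 (sup_le ?_ ?_)
          · exact hy'.2
          · exact hz'.2
        have hprops : ∀ ℓ ∈ (x ::ₘ S₀), ℓ.Valid ∧ ℓ.val ≤ t := by
          intro ℓ hℓ
          rcases Multiset.mem_cons.mp hℓ with h | h
          · subst h; exact ⟨hy'.1.1, hxval⟩
          · exact hS ℓ (Multiset.mem_of_le hsub h)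
        obtain ⟨T, hT1, hT2, hT3⟩ := ih (x ::ₘ S₀) hcard' hprops
        refine ⟨T, hT1, ?_, hT3⟩
        rw [hT2, e2, lsum_cons, lsum_cons, lsum_cons, ← add_assoc, Ltr.em_y_add_em_z]

theorem max_exists (s : Multiset (Ltr L × Kc L × Kc L)) (hs : s ≠ 0) :
    ∃ p ∈ s, ∀ q ∈ s, q.1.size ≤ p.1.size := by
  induction s using Multiset.induction_on with
  | empty => exact absurd rfl hs
  | cons a s ih =>
      by_cases h0 : s = 0
      · subst h0
        exact ⟨a, by simp, by simp⟩
      · obtain ⟨p, hp, hpmax⟩ := ih h0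
        by_cases hle : a.1.size ≤ p.1.size
        · refine ⟨p, Multiset.mem_cons_of_mem hp, ?_⟩
          intro q hq
          rcases Multiset.mem_cons.mp hq with h | h
          · subst h; exact hle
          · exact hpmax q h
        · refine ⟨a, Multiset.mem_cons_self _ _, ?_⟩
          intro q hq
          rcases Multiset.mem_cons.mp hq with h | h
          · subst h; omega
          · exact le_trans (hpmax q h) (by omega)

theorem all_root_count {S : Multiset (Ltr L)} (hS : ∀ ℓ ∈ S, ∃ c, ℓ = Ltr.root c)
    (c : Kc L) : lsum S (Sum.inl c) = S.count (Ltr.root c) := by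
  rw [lsum_apply]
  have hcong : S.map (fun ℓ => ℓ.em (Sum.inl c)) =
      S.map (fun ℓ => if ℓ = Ltr.root c then (1 : ℤ) else 0) := by
    apply Multiset.map_congr rfl
    intro ℓ hℓ
    obtain ⟨c', hc'⟩ := hS ℓ hℓ
    subst hc'
    rw [Ltr.em_apply_inl]
    simp [Ltr.base]
  rw [hcong, sum_ite_count]

theorem idx_eq_zero_root {ℓ : Ltr L} (h : ℓ.idx = 0) : ∃ c, ℓ = Ltr.root c := by
  cases ℓ with
  | root c => exact ⟨c, rfl⟩
  | y x a b => simp [Ltr.idx] at h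
  | z x a b => simp [Ltr.idx] at h

/-- KEY uniqueness lemma -/
theorem lsum_inj : ∀ (n : ℕ) (S T : Multiset (Ltr L)), S.card + T.card ≤ n →
    Irred S → Irred T → lsum S = lsum T → S = T := by
  intro n
  induction n with
  | zero =>
      intro S T hcard _ _ _
      have h1 : S = 0 := Multiset.card_eq_zero.mp (by omega)
      have h2 : T = 0 := Multiset.card_eq_zero.mp (by omega)
      rw [h1, h2]
  | succ n ih =>
      intro S T hcard hS hT hsum
      by_cases hidx : (S + T).bind Ltr.idx = 0
      · -- all letters are roots
        have hroot : ∀ ℓ ∈ S + T, ∃ c, ℓ = Ltr.root c := by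
          intro ℓ hℓ
          apply idx_eq_zero_root
          by_contra h
          obtain ⟨q, hq⟩ := Multiset.exists_mem_of_ne_zero h
          have : q ∈ (S + T).bind Ltr.idx := Multiset.mem_bind.mpr ⟨ℓ, hℓ, hq⟩
          rw [hidx] at this
          simp at this
        have hrootS : ∀ ℓ ∈ S, ∃ c, ℓ = Ltr.root c :=
          fun ℓ hℓ => hroot ℓ (Multiset.mem_add.mpr (Or.inl hℓ))
        have hrootT : ∀ ℓ ∈ T, ∃ c, ℓ = Ltr.root c :=
          fun ℓ hℓ => hroot ℓ (Multiset.mem_add.mpr (Or.inr hℓ))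
        ext ℓ
        by_cases hcase : ∃ c, ℓ = Ltr.root c
        · obtain ⟨c, rfl⟩ := hcase
          have h1 : lsum S (Sum.inl c) = lsum T (Sum.inl c) := by
            rw [hsum]
          rw [all_root_count hrootS, all_root_count hrootT] at h1
          exact_mod_cast h1
        · rw [Multiset.count_eq_zero_of_notMem, Multiset.count_eq_zero_of_notMem]
          · intro hmem; exact hcase (hrootT ℓ hmem)
          · intro hmem; exact hcase (hrootS ℓ hmem)
      · obtain ⟨p, hp, hpmax⟩ := max_exists _ hidx
        have hmaxS : ∀ ℓ ∈ S, ∀ q ∈ Ltr.idx ℓ, q.1.size ≤ p.1.size := by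
          intro ℓ hℓ q hq
          exact hpmax q (Multiset.mem_bind.mpr ⟨ℓ, Multiset.mem_add.mpr (Or.inl hℓ), hq⟩)
        have hmaxT : ∀ ℓ ∈ T, ∀ q ∈ Ltr.idx ℓ, q.1.size ≤ p.1.size := by
          intro ℓ hℓ q hq
          exact hpmax q (Multiset.mem_bind.mpr ⟨ℓ, Multiset.mem_add.mpr (Or.inr hℓ), hq⟩)
        set yp := Ltr.y p.1 p.2.1 p.2.2 with hyp
        set zp := Ltr.z p.1 p.2.1 p.2.2 with hzp
        have hco : (S.count yp : ℤ) - S.count zp = (T.count yp : ℤ) - T.count zp := by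
          rw [← lsum_apply_inr_max hmaxS, ← lsum_apply_inr_max hmaxT, hsum]
        have hSi : S.count yp = 0 ∨ S.count zp = 0 := by
          by_contra h
          push_neg at h
          exact hS p.1 p.2.1 p.2.2
            ⟨Multiset.count_pos.mp (Nat.pos_of_ne_zero h.1),
             Multiset.count_pos.mp (Nat.pos_of_ne_zero h.2)⟩
        have hTi : T.count yp = 0 ∨ T.count zp = 0 := by
          by_contra h
          push_neg at h
          exact hT p.1 p.2.1 p.2.2
            ⟨Multiset.count_pos.mp (Nat.pos_of_ne_zero h.1),
             Multiset.count_pos.mp (Nat.pos_of_ne_zero h.2)⟩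
        have hcy : S.count yp = T.count yp ∧ S.count zp = T.count zp := by omega
        -- some occurrence exists
        obtain ⟨ℓ₀, hℓ₀mem, hℓ₀idx⟩ := Multiset.mem_bind.mp hp
        have hℓ₀ : ℓ₀ = yp ∨ ℓ₀ = zp :=
          Ltr.eq_y_or_z_of_mem_idx_max hℓ₀idx
            (fun q hq => hpmax q (Multiset.mem_bind.mpr ⟨ℓ₀, hℓ₀mem, hq⟩))
        have hpos : 0 < S.count yp + S.count zp + T.count yp + T.count zp := by
          rcases hℓ₀ with rfl | rfl
          · rcases Multiset.mem_add.mp hℓ₀mem with h | h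
            · have := Multiset.count_pos.mpr h; omega
            · have := Multiset.count_pos.mpr h; omega
          · rcases Multiset.mem_add.mp hℓ₀mem with h | h
            · have := Multiset.count_pos.mpr h; omega
            · have := Multiset.count_pos.mpr h; omega
        -- pick a common letter to remove
        have hcommon : ∃ w : Ltr L, w ∈ S ∧ w ∈ T := by
          by_cases h1 : yp ∈ S
          · refine ⟨yp, h1, ?_⟩
            rw [← Multiset.count_pos, ← hcy.1]
            exact Multiset.count_pos.mpr h1
          · by_cases h2 : zp ∈ S
            · refine ⟨zp, h2, ?_⟩
              rw [← Multiset.count_pos, ← hcy.2]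
              exact Multiset.count_pos.mpr h2
            · exfalso
              have hc1 : S.count yp = 0 := Multiset.count_eq_zero_of_notMem h1
              have hc2 : S.count zp = 0 := Multiset.count_eq_zero_of_notMem h2
              omega
        obtain ⟨w, hwS, hwT⟩ := hcommon
        have eS : S = w ::ₘ S.erase w := (Multiset.cons_erase hwS).symm
        have eT : T = w ::ₘ T.erase w := (Multiset.cons_erase hwT).symm
        have hsum' : lsum (S.erase w) = lsum (T.erase w) := by
          have : lsum S = lsum T := hsum
          rw [eS, eT, lsum_cons, lsum_cons] at this
          exact add_left_cancel this
        have hcard' : (S.erase w).card + (T.erase w).card ≤ n := by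
          have h1 : S.card = (S.erase w).card + 1 := by rw [eS]; simp
          have h2 : T.card = (T.erase w).card + 1 := by rw [eT]; simp
          omega
        have heq := ih (S.erase w) (T.erase w) hcard'
          (hS.mono (Multiset.erase_le _ _)) (hT.mono (Multiset.erase_le _ _)) hsum'
        rw [eS, eT, heq]

def Gen (t : L) : Set (Q L) := {q | ∃ ℓ : Ltr L, ℓ.Valid ∧ ℓ.val ≤ t ∧ ℓ.em = q}

noncomputable def Psi (t : L) : AddSubmonoid (Q L) := AddSubmonoid.closure (Gen t)

theorem Gen_mono {t t' : L} (h : t ≤ t') : Gen t ⊆ Gen t' := by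
  rintro q ⟨ℓ, h1, h2, h3⟩
  exact ⟨ℓ, h1, h2.trans h, h3⟩

theorem Psi_mono {t t' : L} (h : t ≤ t') : Psi t ≤ Psi t' :=
  AddSubmonoid.closure_mono (Gen_mono h)

theorem mem_Psi_iff {t : L} {q : Q L} :
    q ∈ Psi t ↔ ∃ S : Multiset (Ltr L), (∀ ℓ ∈ S, ℓ.Valid ∧ ℓ.val ≤ t) ∧ lsum S = q := by
  constructor
  · intro hq
    obtain ⟨l, hl, hsum⟩ := AddSubmonoid.exists_multiset_of_mem_closure hq
    have : ∀ l : Multiset (Q L), (∀ y ∈ l, y ∈ Gen t) →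
        ∃ S : Multiset (Ltr L), (∀ ℓ ∈ S, ℓ.Valid ∧ ℓ.val ≤ t) ∧ S.map Ltr.em = l := by
      intro l
      induction l using Multiset.induction_on with
      | empty => intro _; exact ⟨0, by simp, by simp⟩
      | cons a s ih =>
          intro h
          obtain ⟨S, hS1, hS2⟩ := ih (fun y hy => h y (Multiset.mem_cons_of_mem hy))
          obtain ⟨ℓ, hv, hle, hem⟩ := h a (Multiset.mem_cons_self _ _)
          refine ⟨ℓ ::ₘ S, ?_, by simp [hS2, hem]⟩
          intro m hm
          rcases Multiset.mem_cons.mp hm with h' | h'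
          · subst h'; exact ⟨hv, hle⟩
          · exact hS1 m h'
    obtain ⟨S, hS1, hS2⟩ := this l hl
    exact ⟨S, hS1, by rw [lsum, hS2, hsum]⟩
  · rintro ⟨S, hS, rfl⟩
    apply AddSubmonoid.multiset_sum_mem
    intro q hq
    obtain ⟨ℓ, hℓ, rfl⟩ := Multiset.mem_map.mp hq
    exact AddSubmonoid.subset_closure ⟨ℓ, (hS ℓ hℓ).1, (hS ℓ hℓ).2, rfl⟩

theorem exists_irred {t : L} {q : Q L} (h : q ∈ Psi t) :
    ∃ T, Irred T ∧ lsum T = q ∧ ∀ ℓ ∈ T, ℓ.Valid ∧ ℓ.val ≤ t := by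
  obtain ⟨S, hS1, hS2⟩ := mem_Psi_iff.mp h
  obtain ⟨T, h1, h2, h3⟩ := reduce t S.card S le_rfl hS1
  exact ⟨T, h1, h2.trans hS2, h3⟩

theorem Psi_bot : Psi (⊥ : L) = ⊥ := by
  have : Gen (⊥ : L) = ∅ := by
    ext q
    simp only [Gen, Set.mem_setOf_eq, Set.mem_empty_iff_false, iff_false]
    rintro ⟨ℓ, h1, h2, _⟩
    exact Ltr.val_ne_bot h1 (le_bot_iff.mp h2)
  rw [Psi, this, AddSubmonoid.closure_empty]

theorem Psi_sInf {S : Set L} (hS : S.Nonempty) : Psi (sInf S) = sInf (Psi '' S) := by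
  apply le_antisymm
  · apply _root_.le_sInf
    rintro N ⟨s, hs, rfl⟩
    exact Psi_mono (sInf_le hs)
  · intro q hq
    have hmem : ∀ s ∈ S, q ∈ Psi s := by
      intro s hs
      exact AddSubmonoid.mem_sInf.mp hq _ ⟨s, hs, rfl⟩
    obtain ⟨s₀, hs₀⟩ := hS
    obtain ⟨T₀, hT₀i, hT₀sum, hT₀b⟩ := exists_irred (hmem s₀ hs₀)
    have hbd : ∀ s ∈ S, ∀ ℓ ∈ T₀, ℓ.val ≤ s := by
      intro s hs ℓ hℓ
      obtain ⟨T, hTi, hTsum, hTb⟩ := exists_irred (hmem s hs)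
      have : T = T₀ := lsum_inj (T.card + T₀.card) T T₀ le_rfl hTi hT₀i
        (hTsum.trans hT₀sum.symm)
      subst this
      exact (hTb ℓ hℓ).2
    apply mem_Psi_iff.mpr
    refine ⟨T₀, ?_, hT₀sum⟩
    intro ℓ hℓ
    exact ⟨(hT₀b ℓ hℓ).1, le_sInf fun s hs => hbd s hs ℓ hℓ⟩

theorem compact_split
    (halg : ∀ x : L, sSup {c : L | IsCompactElement c ∧ c ≤ x} = x)
    {c t u : L} (hc : IsCompactElement c) (h : c ≤ t ⊔ u) :
    ∃ a b : L, IsCompactElement a ∧ IsCompactElement b ∧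
      a ≤ t ∧ b ≤ u ∧ c ≤ a ⊔ b := by
  set A := {c : L | IsCompactElement c ∧ c ≤ t} with hA
  set B := {c : L | IsCompactElement c ∧ c ≤ u} with hB
  have hsup : t ⊔ u = sSup (A ∪ B) := by
    rw [sSup_union, halg, halg]
  obtain ⟨G, hG1, hG2⟩ := (isCompactElement_iff_exists_le_sSup_of_le_sSup (k := c)).mp hc (A ∪ B) (h.trans_eq hsup)
  set Ga := G.filter (fun x => x ≤ t) with hGa
  set Gb := G.filter (fun x => ¬ x ≤ t) with hGb
  refine ⟨Ga.sup id, Gb.sup id, ?_, ?_, ?_, ?_, ?_⟩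
  · apply isCompactElement_finsetSup
    intro x hx
    have := hG1 (Finset.mem_filter.mp hx).1
    rcases this with h' | h' <;> exact h'.1
  · apply isCompactElement_finsetSup
    intro x hx
    have := hG1 (Finset.mem_filter.mp hx).1
    rcases this with h' | h' <;> exact h'.1
  · apply Finset.sup_le
    intro x hx
    exact (Finset.mem_filter.mp hx).2
  · apply Finset.sup_le
    intro x hx
    have hmem := hG1 (Finset.mem_filter.mp hx).1
    rcases hmem with h' | h'
    · exact absurd h'.2 (Finset.mem_filter.mp hx).2
    · exact h'.2
  · calc c ≤ G.sup id := hG2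
      _ = (Ga ∪ Gb).sup id := by rw [hGa, hGb, Finset.filter_union_filter_not_eq]
      _ = Ga.sup id ⊔ Gb.sup id := Finset.sup_union

theorem decomp
    (halg : ∀ x : L, sSup {c : L | IsCompactElement c ∧ c ≤ x} = x) :
    ∀ (F : Finset L) (ℓ : Ltr L), ℓ.Valid → ℓ.val ≤ F.sup id →
      ℓ.em ∈ ⨆ t ∈ F, Psi t := by
  intro F
  induction F using Finset.induction_on with
  | empty =>
      intro ℓ hv hle
      simp only [Finset.sup_empty] at hle
      exact absurd (le_bot_iff.mp hle) (Ltr.val_ne_bot hv)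
  | @insert t F htF ih =>
      intro ℓ hv hle
      rw [Finset.sup_insert] at hle
      have hPsit : Psi t ≤ ⨆ x ∈ insert t F, Psi x :=
        le_iSup₂ (f := fun (x : L) (_ : x ∈ insert t F) => Psi x) t (Finset.mem_insert_self t F)
      have hrest : (⨆ x ∈ F, Psi x) ≤ ⨆ x ∈ insert t F, Psi x :=
        biSup_mono fun x hx => Finset.mem_insert_of_mem hx
      by_cases h1 : ℓ.val ≤ t
      · exact hPsit (AddSubmonoid.subset_closure ⟨ℓ, hv, h1, rfl⟩)
      by_cases h2 : ℓ.val ≤ F.sup id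
      · exact hrest (ih ℓ hv h2)
      obtain ⟨a, b, hac, hbc, hat, hbu, hcab⟩ :=
        compact_split halg (Ltr.val_isCompact ℓ) hle
      have ha : a ≠ ⊥ := by
        intro h'
        subst h'
        rw [bot_sup_eq] at hcab
        exact h2 (hcab.trans hbu)
      have hb : b ≠ ⊥ := by
        intro h'
        subst h'
        rw [sup_bot_eq] at hcab
        exact h1 (hcab.trans hat)
      set ℓ₁ := Ltr.y ℓ ⟨a, hac⟩ ⟨b, hbc⟩ with hℓ₁
      set ℓ₂ := Ltr.z ℓ ⟨a, hac⟩ ⟨b, hbc⟩ with hℓ₂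
      have hv₁ : ℓ₁.Valid := ⟨hv, ha, hb, hcab⟩
      have hv₂ : ℓ₂.Valid := ⟨hv, ha, hb, hcab⟩
      have hsplit : ℓ.em = ℓ₁.em + ℓ₂.em := (Ltr.em_y_add_em_z ℓ _ _).symm
      rw [hsplit]
      apply AddSubmonoid.add_mem
      · exact hPsit (AddSubmonoid.subset_closure ⟨ℓ₁, hv₁, hat, rfl⟩)
      · exact hrest (ih ℓ₂ hv₂ hbu)

theorem Psi_sSup
    (halg : ∀ x : L, sSup {c : L | IsCompactElement c ∧ c ≤ x} = x)
    (S : Set L) : Psi (sSup S) = ⨆ s ∈ S, Psi s := by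
  apply le_antisymm
  · apply AddSubmonoid.closure_le.mpr
    rintro q ⟨ℓ, hv, hle, rfl⟩
    obtain ⟨F, hF1, hF2⟩ := (isCompactElement_iff_exists_le_sSup_of_le_sSup (k := ℓ.val)).mp (Ltr.val_isCompact ℓ) S hle
    have : Ltr.em ℓ ∈ ⨆ t ∈ F, Psi t := decomp halg F ℓ hv hF2
    have hle2 : (⨆ t ∈ F, Psi t) ≤ ⨆ s ∈ S, Psi s := by
      apply iSup₂_le
      intro x hx
      exact le_iSup₂ (f := fun (s : L) (_ : s ∈ S) => Psi s) x (hF1 hx)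
    exact hle2 this
  · apply iSup₂_le
    intro s hs
    exact Psi_mono (le_sSup hs)

theorem le_of_Psi_le
    (halg : ∀ x : L, sSup {c : L | IsCompactElement c ∧ c ≤ x} = x)
    {t₁ t₂ : L} (h : Psi t₁ ≤ Psi t₂) : t₁ ≤ t₂ := by
  conv_lhs => rw [← halg t₁]
  apply _root_.sSup_le
  rintro c ⟨hcomp, hle⟩
  by_cases hbot : c = ⊥
  · subst hbot; exact bot_le
  have hmem : (Ltr.root ⟨c, hcomp⟩ : Ltr L).em ∈ Psi t₁ :=
    AddSubmonoid.subset_closure ⟨Ltr.root ⟨c, hcomp⟩, hbot, hle, rfl⟩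
  obtain ⟨T, hTi, hTsum, hTb⟩ := exists_irred (h hmem)
  have hsing : lsum ({Ltr.root ⟨c, hcomp⟩} : Multiset (Ltr L)) =
      (Ltr.root ⟨c, hcomp⟩ : Ltr L).em := by
    simp [lsum]
  have hIs : Irred ({Ltr.root ⟨c, hcomp⟩} : Multiset (Ltr L)) := by
    intro x a b hx
    have := hx.1
    simp only [Multiset.mem_singleton] at this
    cases this
  have hTeq : T = ({Ltr.root ⟨c, hcomp⟩} : Multiset (Ltr L)) :=
    lsum_inj (T.card + 1) T _ (by simp) hTi hIs (hTsum.trans hsing.symm)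
  have : (Ltr.root ⟨c, hcomp⟩ : Ltr L) ∈ T := by rw [hTeq]; simp
  exact (hTb _ this).2

theorem Psi_injective
    (halg : ∀ x : L, sSup {c : L | IsCompactElement c ∧ c ≤ x} = x) :
    Function.Injective (Psi : L → AddSubmonoid (Q L)) := fun t₁ t₂ h =>
  le_antisymm (le_of_Psi_le halg h.le) (le_of_Psi_le halg h.ge)

section Embedding

def enc : Ltr L → List (Kc L ⊕ (Kc L × Kc L) ⊕ (Kc L × Kc L))
  | .root c => [Sum.inl c]
  | .y x a b => Sum.inr (Sum.inl (a, b)) :: enc x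
  | .z x a b => Sum.inr (Sum.inr (a, b)) :: enc x

theorem enc_injective : ∀ x w : Ltr L, enc x = enc w → x = w := by
  intro x
  induction x with
  | root c =>
      intro w h
      cases w with
      | root c' => simp only [enc, List.cons.injEq, Sum.inl.injEq] at h; rw [h.1]
      | y x' a' b' => simp [enc] at h
      | z x' a' b' => simp [enc] at h
  | y x a b ih =>
      intro w h
      cases w with
      | root c' => simp [enc] at h
      | y x' a' b' =>
          simp only [enc, List.cons.injEq, Sum.inr.injEq, Sum.inl.injEq, Prod.mk.injEq] at h
          obtain ⟨⟨rfl, rfl⟩, h2⟩ := h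
          rw [ih _ h2]
      | z x' a' b' => simp [enc] at h
  | z x a b ih =>
      intro w h
      cases w with
      | root c' => simp [enc] at h
      | y x' a' b' => simp [enc] at h
      | z x' a' b' =>
          simp only [enc, List.cons.injEq, Sum.inr.injEq, Prod.mk.injEq] at h
          obtain ⟨⟨rfl, rfl⟩, h2⟩ := h
          rw [ih _ h2]

variable (α : Type u) [Infinite α]

theorem mk_Bs_le (hcard : Cardinal.mk (Kc L) ≤ 2 ^ Cardinal.mk α) :
    Cardinal.mk (Bs L) ≤ 2 ^ Cardinal.mk α := by
  set κ := Cardinal.mk α with hκ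
  have hκinf : (Cardinal.aleph0 : Cardinal) ≤ κ := Cardinal.aleph0_le_mk α
  have h2 : (Cardinal.aleph0 : Cardinal) ≤ 2 ^ κ := by
    calc (Cardinal.aleph0 : Cardinal) ≤ 2 ^ (Cardinal.aleph0 : Cardinal) := (Cardinal.cantor _).le
      _ ≤ 2 ^ κ := Cardinal.power_le_power_left (by norm_num) hκinf
  have hKK : Cardinal.mk (Kc L × Kc L) ≤ 2 ^ κ := by
    rw [Cardinal.mk_prod]
    simp only [Cardinal.lift_id]
    calc Cardinal.mk (Kc L) * Cardinal.mk (Kc L) ≤ (2 ^ κ) * (2 ^ κ) :=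
          mul_le_mul' hcard hcard
      _ = 2 ^ κ := Cardinal.mul_eq_self h2
  have hX : Cardinal.mk (Kc L ⊕ (Kc L × Kc L) ⊕ (Kc L × Kc L)) ≤ 2 ^ κ := by
    rw [Cardinal.mk_sum, Cardinal.mk_sum]
    simp only [Cardinal.lift_id]
    exact Cardinal.add_le_of_le h2 hcard (Cardinal.add_le_of_le h2 hKK hKK)
  have hLtr : Cardinal.mk (Ltr L) ≤ 2 ^ κ := by
    calc Cardinal.mk (Ltr L)
        ≤ Cardinal.mk (List (Kc L ⊕ (Kc L × Kc L) ⊕ (Kc L × Kc L))) :=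
          Cardinal.mk_le_of_injective (f := enc) (fun x w => enc_injective x w)
      _ ≤ max Cardinal.aleph0 (Cardinal.mk (Kc L ⊕ (Kc L × Kc L) ⊕ (Kc L × Kc L))) :=
          Cardinal.mk_list_le_max _
      _ ≤ 2 ^ κ := max_le h2 hX
  have hTriple : Cardinal.mk (Ltr L × Kc L × Kc L) ≤ 2 ^ κ := by
    rw [Cardinal.mk_prod]
    simp only [Cardinal.lift_id]
    calc Cardinal.mk (Ltr L) * Cardinal.mk (Kc L × Kc L) ≤ (2 ^ κ) * (2 ^ κ) :=
          mul_le_mul' hLtr hKK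
      _ = 2 ^ κ := Cardinal.mul_eq_self h2
  rw [show Bs L = (Kc L ⊕ (Ltr L × Kc L × Kc L)) from rfl, Cardinal.mk_sum,
    Cardinal.lift_id, Cardinal.lift_id]
  exact Cardinal.add_le_of_le h2 hcard hTriple

variable {α}

noncomputable def sigA (ι : Bs L ↪ (α → ULift.{u, 0} Bool)) (A : Finset α) : Bs L → (↥A → ULift.{u, 0} Bool) :=
  fun b x => ι b x.1

noncomputable def theta1 (ι : Bs L ↪ (α → ULift.{u, 0} Bool)) (q : Q L) (A : Finset α) :
    ((↥A → ULift.{u, 0} Bool) →₀ ℤ) :=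
  Finsupp.mapDomain (sigA ι A) q

theorem theta1_add (ι : Bs L ↪ (α → ULift.{u, 0} Bool)) (q r : Q L) (A : Finset α) :
    theta1 ι (q + r) A = theta1 ι q A + theta1 ι r A :=
  Finsupp.mapDomain_add

theorem theta1_inj (ι : Bs L ↪ (α → ULift.{u, 0} Bool)) {q : Q L}
    (h : ∀ A : Finset α, theta1 ι q A = 0) : q = 0 := by
  by_contra hq
  obtain ⟨b₀, hb₀⟩ := Finsupp.support_nonempty_iff.mpr hq
  classical
  set f : Bs L × Bs L → α := fun p =>
    if hex : ∃ x, ι p.1 x ≠ ι p.2 x then hex.choose else Classical.arbitrary α with hf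
  set T := q.support with hT
  set A : Finset α := (T ×ˢ T).image f with hA
  have hinj : Set.InjOn (sigA ι A) ↑T := by
    intro b hb b' hb' heq
    by_contra hne
    have hfun : ι b ≠ ι b' := fun hh => hne (ι.injective hh)
    have hex : ∃ x, ι b x ≠ ι b' x := Function.ne_iff.mp hfun
    have hmem : f (b, b') ∈ A := by
      rw [hA]
      exact Finset.mem_image_of_mem f (Finset.mem_product.mpr ⟨hb, hb'⟩)
    have hval : ι b (f (b, b')) ≠ ι b' (f (b, b')) := by
      rw [hf]
      simp only [dif_pos hex]
      exact hex.choose_spec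
    exact hval (congrFun heq ⟨f (b, b'), hmem⟩)
  have := Finsupp.mapDomain_apply' (↑T : Set (Bs L)) q subset_rfl hinj hb₀
  rw [show Finsupp.mapDomain (sigA ι A) q = theta1 ι q A from rfl, h A] at this
  simp only [Finsupp.coe_zero, Pi.zero_apply] at this
  exact (Finsupp.mem_support_iff.mp hb₀) this.symm

noncomputable def Theta (ι : Bs L ↪ (α → ULift.{u, 0} Bool)) :
    Multiplicative (Q L) →* Equiv.Perm (Σ A : Finset α, ((↥A → ULift.{u, 0} Bool) →₀ ℤ)) where
  toFun q := Equiv.sigmaCongrRight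
    (fun A => Equiv.addLeft (theta1 ι (Multiplicative.toAdd q) A))
  map_one' := by
    apply Equiv.ext
    rintro ⟨A, v⟩
    simp [theta1, Equiv.Perm.coe_one]
  map_mul' q r := by
    apply Equiv.ext
    rintro ⟨A, v⟩
    simp [theta1_add, add_assoc, Equiv.Perm.mul_apply]

theorem Theta_injective (ι : Bs L ↪ (α → ULift.{u, 0} Bool)) : Function.Injective (Theta (L := L) ι) := by
  rw [injective_iff_map_eq_one]
  intro q hq
  have h0 : ∀ A : Finset α, theta1 ι (Multiplicative.toAdd q) A = 0 := by
    intro A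
    have h1 : (Theta ι q) ⟨A, 0⟩ = ⟨A, 0⟩ := by rw [hq]; rfl
    have h2 : (Theta ι q) ⟨A, 0⟩
        = ⟨A, theta1 ι (Multiplicative.toAdd q) A + 0⟩ := rfl
    rw [h2] at h1
    have := (Sigma.mk.inj_iff.mp h1).2
    rw [add_zero] at this
    exact eq_of_heq this
  have := theta1_inj ι h0
  rw [← toAdd_one] at this
  exact Multiplicative.toAdd.injective this

variable (α)

theorem mk_sigma_le :
    Cardinal.mk (Σ A : Finset α, ((↥A → ULift.{u, 0} Bool) →₀ ℤ)) ≤ Cardinal.mk α := by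
  have h1 : Cardinal.mk (Σ A : Finset α, ((↥A → ULift.{u, 0} Bool) →₀ ℤ))
      = Cardinal.sum (fun A : Finset α => Cardinal.mk ((↥A → ULift.{u, 0} Bool) →₀ ℤ)) :=
    Cardinal.mk_sigma _
  rw [h1]
  calc Cardinal.sum (fun A : Finset α => Cardinal.mk ((↥A → ULift.{u, 0} Bool) →₀ ℤ))
      ≤ Cardinal.sum (fun _ : Finset α => (Cardinal.aleph0 : Cardinal)) := by
        apply Cardinal.sum_le_sum
        intro A
        exact Cardinal.mk_le_aleph0
    _ = Cardinal.mk (Finset α) * Cardinal.aleph0 := Cardinal.sum_const' _ _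
    _ = Cardinal.mk α * Cardinal.aleph0 := by rw [Cardinal.mk_finset_of_infinite]
    _ = Cardinal.mk α := Cardinal.mul_eq_left (Cardinal.aleph0_le_mk α) (Cardinal.aleph0_le_mk α)
        (by exact Cardinal.aleph0_ne_zero)

end Embedding

theorem map_iSup_hom {M N : Type*} [Monoid M] [Monoid N] (f : M →* N) {ι : Sort*}
    (g : ι → Submonoid M) :
    Submonoid.map f (⨆ i, g i) = ⨆ i, Submonoid.map f (g i) :=
  (Submonoid.gc_map_comap f).l_iSup

theorem map_iInf_hom {M N : Type*} [Monoid M] [Monoid N] (f : M →* N)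
    (hf : Function.Injective f) {ι : Sort*} [Nonempty ι] (g : ι → Submonoid M) :
    Submonoid.map f (⨅ i, g i) = ⨅ i, Submonoid.map f (g i) := by
  apply le_antisymm
  · exact le_iInf fun i => (Submonoid.gc_map_comap f).monotone_l (iInf_le _ i)
  · intro π hπ
    have h1 : ∀ i, π ∈ Submonoid.map f (g i) := fun i => Submonoid.mem_iInf.mp hπ i
    obtain ⟨i₀⟩ := ‹Nonempty ι›
    obtain ⟨q₀, hq₀, hq₀π⟩ := h1 i₀
    refine ⟨q₀, ?_, hq₀π⟩
    rw [SetLike.mem_coe, Submonoid.mem_iInf]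
    intro i
    obtain ⟨q', hq', hq'π⟩ := h1 i
    have hqq : q' = q₀ := hf (by rw [hq'π, hq₀π])
    rwa [hqq] at hq'

end PermMonUniversal

open PermMonUniversal

/-- every complete algebraic lattice with at most `2 ^ #λ` compact elements embeds
into the lattice of submonoids of the symmetric group `Equiv.Perm λ` via an injection preserving
all nonempty suprema and infima, which moreover sends the bottom element to the trivial
submonoid `⊥` (consisting only of the identity permutation). -/
theorem permMonLattice_universal (α : Type u) [Infinite α] (L : Type u) [CompleteLattice L]
    (halg : ∀ x : L, sSup {c : L | IsCompactElement c ∧ c ≤ x} = x)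
    (hcard : Cardinal.mk {c : L // IsCompactElement c} ≤ 2 ^ Cardinal.mk α) :
    ∃ Φ : L → Submonoid (Equiv.Perm α),
      Function.Injective Φ ∧
      (∀ S : Set L, S.Nonempty → Φ (sSup S) = sSup (Φ '' S)) ∧
      (∀ S : Set L, S.Nonempty → Φ (sInf S) = sInf (Φ '' S)) ∧
      Φ ⊥ = ⊥ := by
  classical
  obtain ⟨ι⟩ : Nonempty (Bs L ↪ (α → ULift.{u, 0} Bool)) := by
    rw [← Cardinal.le_def]
    have h1 : Cardinal.mk (α → ULift.{u, 0} Bool) = 2 ^ Cardinal.mk α := by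
      rw [← Cardinal.power_def (ULift.{u, 0} Bool) α]
      congr 1
      simp
    rw [h1]
    exact mk_Bs_le α hcard
  obtain ⟨emb⟩ : Nonempty ((Σ A : Finset α, ((↥A → ULift.{u, 0} Bool) →₀ ℤ)) ↪ α) := by
    rw [← Cardinal.le_def]
    exact mk_sigma_le α
  set θ : Multiplicative (Q L) →* Equiv.Perm α :=
    (Equiv.Perm.viaEmbeddingHom emb).comp (Theta ι) with hθ
  have θinj : Function.Injective θ :=
    (Equiv.Perm.viaEmbeddingHom_injective emb).comp (Theta_injective ι)
  set e2 : AddSubmonoid (Q L) ≃o Submonoid (Multiplicative (Q L)) :=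
    AddSubmonoid.toSubmonoid with he2
  refine ⟨fun t => Submonoid.map θ (e2 (Psi t)), ?_, ?_, ?_, ?_⟩
  · intro t₁ t₂ h
    apply Psi_injective halg
    apply e2.injective
    exact Submonoid.map_injective_of_injective θinj h
  · intro S hS
    have h1 : Psi (sSup S) = ⨆ s : S, Psi (s : L) := by
      apply le_antisymm
      · rw [Psi_sSup halg S]
        exact iSup₂_le fun s hs => le_iSup (fun s : S => Psi (s : L)) ⟨s, hs⟩
      · apply iSup_le
        intro s
        rw [Psi_sSup halg S]
        exact le_iSup₂ (f := fun (x : L) (_ : x ∈ S) => Psi x) s.1 s.2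
    rw [sSup_image']
    calc Submonoid.map θ (e2 (Psi (sSup S)))
        = Submonoid.map θ (e2 (⨆ s : S, Psi (s : L))) := by rw [h1]
      _ = Submonoid.map θ (⨆ s : S, e2 (Psi (s : L))) := by rw [map_iSup]
      _ = ⨆ s : S, Submonoid.map θ (e2 (Psi (s : L))) := map_iSup_hom θ _
  · intro S hS
    haveI : Nonempty ↥S := hS.to_subtype
    have h2 : Psi (sInf S) = ⨅ s : S, Psi (s : L) := by
      rw [Psi_sInf hS, sInf_image']
    rw [sInf_image']
    calc Submonoid.map θ (e2 (Psi (sInf S)))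
        = Submonoid.map θ (e2 (⨅ s : S, Psi (s : L))) := by rw [h2]
      _ = Submonoid.map θ (⨅ s : S, e2 (Psi (s : L))) := by rw [map_iInf]
      _ = ⨅ s : S, Submonoid.map θ (e2 (Psi (s : L))) := map_iInf_hom θ θinj _
  · show Submonoid.map θ (e2 (Psi (⊥ : L))) = ⊥
    rw [Psi_bot]
    rw [show e2 (⊥ : AddSubmonoid (Q L)) = ⊥ from e2.map_bot]
    exact Submonoid.map_bot θ
end

section
/- Let K be a complete algebraic lattice and let L be a nonempty subset of K that is closed under suprema and infima (computed in K) of all nonempty subsets of L. Then L, equipped with the order induced from K, is a complete lattice and is algebraic, i.e., every element of L is the supremum in L of the compact elements of L below it. -/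
/-- The December 2024 Mathlib definition of a compact element of a complete lattice
(since replaced in Mathlib by the root-level `IsCompactElement`, stated via directed sets). -/
def CompleteLattice.IsCompactElement {α : Type*} [CompleteLattice α] (k : α) :=
  ∀ s : Set α, k ≤ sSup s → ∃ t : Finset α, ↑t ⊆ s ∧ k ≤ t.sup id

/-- a nonempty subset `L` of a complete algebraic lattice `K` that is closed under
nonempty suprema and infima (computed in `K`) is, with the induced order, a complete lattice
which is again algebraic: every element is the supremum (in `L`) of the compact elements
(of `L`) below it. -/
theorem closedSublattice_isAlgebraic {K : Type u} [CompleteLattice K]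
    (halgK : ∀ x : K, sSup {c : K | CompleteLattice.IsCompactElement c ∧ c ≤ x} = x)
    (L : Set K) (hne : L.Nonempty)
    (hSup : ∀ S : Set K, S ⊆ L → S.Nonempty → sSup S ∈ L)
    (hInf : ∀ S : Set K, S ⊆ L → S.Nonempty → sInf S ∈ L) :
    ∃ inst : CompleteLattice ↥L,
      (∀ a b : ↥L, inst.le a b ↔ (a : K) ≤ (b : K)) ∧
      (∀ x : ↥L,
        inst.sSup {c : ↥L | @CompleteLattice.IsCompactElement ↥L inst c ∧ inst.le c x} = x) := by
  have hbot : sInf L ∈ L := hInf L le_rfl hne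
  letI : SupSet ↥L := ⟨fun S => ⟨sSup (insert (sInf L) ((↑) '' S)),
    hSup _ (by rintro y (rfl | ⟨a, ha, rfl⟩); exacts [hbot, a.2]) ⟨_, Set.mem_insert _ _⟩⟩⟩
  have hlub : ∀ S : Set ↥L, IsLUB S (sSup S) := by
    intro S
    constructor
    · intro a ha
      show (a : K) ≤ _
      exact le_sSup (Set.mem_insert_of_mem _ ⟨a, ha, rfl⟩)
    · intro b hb
      show sSup _ ≤ (b : K)
      apply sSup_le
      rintro y (rfl | ⟨a, ha, rfl⟩)
      · exact sInf_le b.2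
      · exact hb ha
  letI inst : CompleteLattice ↥L := completeLatticeOfSup ↥L hlub
  refine ⟨inst, fun a b => Iff.rfl, ?_⟩
  intro x
  apply Subtype.ext
  show sSup (insert (sInf L) _) = (x : K)
  apply le_antisymm
  · apply sSup_le
    rintro y (rfl | ⟨a, ⟨_, hax⟩, rfl⟩)
    · exact sInf_le x.2
    · exact hax
  · conv_lhs => rw [← halgK (x : K)]
    apply sSup_le
    rintro k ⟨hk, hkx⟩
    have hTne : ({y | y ∈ L ∧ k ≤ y} : Set K).Nonempty := ⟨x, x.2, hkx⟩
    set kc : ↥L := ⟨sInf {y | y ∈ L ∧ k ≤ y}, hInf _ (fun y hy => hy.1) hTne⟩ with hkcdef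
    have hkkc : k ≤ (kc : K) := le_sInf fun y hy => hy.2
    have hkcmin : ∀ c : ↥L, k ≤ (c : K) → (kc : K) ≤ c := fun c hc => sInf_le ⟨c.2, hc⟩
    have hkc_compact : CompleteLattice.IsCompactElement kc := by
      refine (CompleteLattice.isCompactElement_iff_exists_le_sSup_of_le_sSup (k := kc)).mp ?_
      rw [CompleteLattice.isCompactElement_iff_le_of_directed_sSup_le]
      intro s hsne hsdir hle
      have hle' : (kc : K) ≤ sSup (insert (sInf L) ((↑) '' s)) := hle
      have hk' : k ≤ sSup (insert (sInf L) ((↑) '' s)) := le_trans hkkc hle'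
      have hdir : DirectedOn (· ≤ ·) (insert (sInf L) ((↑) '' s) : Set K) := by
        rintro a (rfl | ⟨a', ha', rfl⟩) b (rfl | ⟨b', hb', rfl⟩)
        · exact ⟨sInf L, Set.mem_insert _ _, le_rfl, le_rfl⟩
        · exact ⟨b', Set.mem_insert_of_mem _ ⟨b', hb', rfl⟩, sInf_le b'.2, le_rfl⟩
        · exact ⟨a', Set.mem_insert_of_mem _ ⟨a', ha', rfl⟩, le_rfl, sInf_le a'.2⟩
        · obtain ⟨c, hc, hac, hbc⟩ := hsdir a' ha' b' hb'
          exact ⟨c, Set.mem_insert_of_mem _ ⟨c, hc, rfl⟩, hac, hbc⟩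
      obtain ⟨y, hy, hky⟩ :=
        (CompleteLattice.isCompactElement_iff_le_of_directed_sSup_le (α := K) k).mp
          ((CompleteLattice.isCompactElement_iff_exists_le_sSup_of_le_sSup (k := k)).mpr hk) _
          ⟨_, Set.mem_insert _ _⟩ hdir hk'
      rcases hy with rfl | ⟨c, hc, rfl⟩
      · obtain ⟨c, hc⟩ := hsne
        refine ⟨c, hc, ?_⟩
        show (kc : K) ≤ (c : K)
        exact le_trans (hkcmin ⟨sInf L, hbot⟩ hky) (sInf_le c.2)
      · exact ⟨c, hc, hkcmin c hky⟩
    exact le_trans hkkc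
      (le_sSup (Set.mem_insert_of_mem _ ⟨kc, ⟨hkc_compact, hkcmin x hkx⟩, rfl⟩))
end

section
/- Let K be a complete algebraic lattice and let L be a nonempty subset of K closed under nonempty suprema and infima computed in K, regarded as a complete lattice with the induced order. For every compact element x of K that lies below some element of L, let x^L denote the smallest element of L above x (i.e., the infimum in K of {y ∈ L : x ≤ y}, which belongs to L). Then the compact elements of the complete lattice L are precisely the elements of the form x^L, where x ranges over the compact elements of K lying below some element of L. -/
/-- let `L` be a nonempty subset of a complete algebraic lattice `K`, closed under
nonempty suprema and infima computed in `K`, regarded as a complete lattice with the induced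
order. For a compact element `x` of `K` lying below some element of `L`, the element
`x^L := sInf {y ∈ L | x ≤ y}` is the smallest element of `L` above `x`. The compact elements of
`L` are precisely the elements of the form `x^L`. -/
theorem closedSublattice_compact_iff {K : Type u} [CompleteLattice K]
    (halgK : ∀ x : K, sSup {c : K | IsCompactElement c ∧ c ≤ x} = x)
    (L : Set K) (hne : L.Nonempty)
    (hSup : ∀ S : Set K, S ⊆ L → S.Nonempty → sSup S ∈ L)
    (hInf : ∀ S : Set K, S ⊆ L → S.Nonempty → sInf S ∈ L)
    (inst : CompleteLattice ↥L)
    (hord : ∀ a b : ↥L, inst.le a b ↔ (a : K) ≤ (b : K)) :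
    ∀ a : ↥L, @IsCompactElement ↥L inst.toPartialOrder a ↔
      ∃ x : K, IsCompactElement x ∧ (∃ y ∈ L, x ≤ y) ∧
        (a : K) = sInf {y : K | y ∈ L ∧ x ≤ y} := by
  classical
  letI instL : CompleteLattice ↥L := inst
  -- the sup of a nonempty set in L agrees with the sup in K
  have hSSup : ∀ S : Set ↥L, S.Nonempty →
      ((sSup S : ↥L) : K) = sSup ((↑) '' S : Set K) := by
    intro S hS
    have hsub : ((↑) '' S : Set K) ⊆ L := by
      rintro _ ⟨b, _, rfl⟩; exact b.2
    have hmem : sSup ((↑) '' S : Set K) ∈ L := hSup _ hsub (hS.image _)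
    apply le_antisymm
    · have : inst.le (sSup S) ⟨_, hmem⟩ := by
        apply sSup_le
        intro b hb
        exact (hord b ⟨_, hmem⟩).mpr (le_sSup ⟨b, hb, rfl⟩)
      exact (hord _ _).mp this
    · apply sSup_le
      rintro _ ⟨b, hb, rfl⟩
      exact (hord b (sSup S)).mp (le_sSup hb)
  -- Finset sup in L agrees with K for subsets
  have hFin : ∀ (t : Finset ↥L) (z : ↥L), (∀ b ∈ t, (b : K) ≤ (z : K)) →
      inst.le (t.sup id) z := by
    intro t z h
    apply Finset.sup_le
    intro b hb
    exact (hord b z).mpr (h b hb)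
  intro a
  constructor
  · -- compact in L → of the form x^L
    intro ha
    set C : Set K := {c : K | IsCompactElement c ∧ c ≤ (a : K)} with hC
    have hbot : (⊥ : K) ∈ C := ⟨(CompleteLattice.isCompactElement_iff_exists_le_sSup_of_le_sSup (k := (⊥ : K))).mpr (fun s _ => ⟨∅, by simp⟩), bot_le⟩
    have hCa : sSup C = (a : K) := halgK _
    -- the closure operator
    set cL : K → K := fun c => sInf {y : K | y ∈ L ∧ c ≤ y} with hcL
    have hcLmem : ∀ c ∈ C, cL c ∈ L := by
      intro c hc
      exact hInf _ (fun y hy => hy.1) ⟨a, a.2, hc.2⟩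
    have hcLle : ∀ c ∈ C, cL c ≤ (a : K) := fun c hc => sInf_le ⟨a.2, hc.2⟩
    have hlecL : ∀ c ∈ C, c ≤ cL c := fun c _ => le_sInf (fun y hy => hy.2)
    set S' : Set ↥L := {b : ↥L | ∃ c ∈ C, (b : K) = cL c} with hS'
    have hS'ne : S'.Nonempty := ⟨⟨cL ⊥, hcLmem _ hbot⟩, ⊥, hbot, rfl⟩
    have haS : inst.le a (sSup S') := by
      rw [hord, hSSup _ hS'ne, ← hCa]
      apply sSup_le
      intro c hc
      exact le_trans (hlecL c hc)
        (le_sSup ⟨⟨cL c, hcLmem c hc⟩, ⟨c, hc, rfl⟩, rfl⟩)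
    obtain ⟨t, htS, hta⟩ := (CompleteLattice.isCompactElement_iff_exists_le_sSup_of_le_sSup (k := a)).mp ha S' haS
    -- choice of compact elements
    have hch : ∀ b ∈ t, ∃ c ∈ C, (b : K) = cL c := fun b hb => htS hb
    set f : ↥L → K := fun b =>
      if h : ∃ c ∈ C, (b : K) = cL c then h.choose else ⊥ with hf
    have hfC : ∀ b ∈ t, f b ∈ C ∧ (b : K) = cL (f b) := by
      intro b hb
      have h := hch b hb
      simp only [hf, dif_pos h]
      exact ⟨h.choose_spec.1, h.choose_spec.2⟩
    set x : K := t.sup f with hx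
    have hxcomp : IsCompactElement x :=
      CompleteLattice.isCompactElement_finsetSup t (fun b hb => (hfC b hb).1.1)
    have hxa : x ≤ (a : K) := Finset.sup_le (fun b hb => (hfC b hb).1.2)
    have hxLmem : cL x ∈ L := hInf _ (fun y hy => hy.1) ⟨a, a.2, hxa⟩
    refine ⟨x, hxcomp, ⟨a, a.2, hxa⟩, ?_⟩
    apply le_antisymm
    · -- a ≤ x^L
      have h2 : inst.le (t.sup id) ⟨cL x, hxLmem⟩ := by
        refine hFin t _ ?_
        intro b hb
        rw [(hfC b hb).2]
        exact sInf_le_sInf (fun y hy => ⟨hy.1, le_trans (Finset.le_sup hb) hy.2⟩)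
      exact le_trans ((hord _ _).mp hta) ((hord _ _).mp h2)
    · exact sInf_le ⟨a.2, hxa⟩
  · -- x^L is compact in L
    rintro ⟨x, hx, ⟨y₀, hy₀L, hy₀⟩, hax⟩
    have hxa : x ≤ (a : K) := hax ▸ le_sInf (fun y hy => hy.2)
    refine (CompleteLattice.isCompactElement_iff_exists_le_sSup_of_le_sSup (k := a)).mpr ?_
    intro S hS
    rcases Set.eq_empty_or_nonempty S with rfl | hSne
    · refine ⟨∅, by simp, ?_⟩
      simpa using hS
    · have h1 : x ≤ sSup ((↑) '' S : Set K) := by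
        refine le_trans hxa ?_
        rw [← hSSup _ hSne]
        exact (hord a (sSup S)).mp hS
      obtain ⟨t, htS, htx⟩ := (CompleteLattice.isCompactElement_iff_exists_le_sSup_of_le_sSup (k := x)).mp hx _ h1
      -- lift t to a finset of ↥L
      have hmemL : ∀ k ∈ t, k ∈ L := fun k hk => by
        obtain ⟨b, _, rfl⟩ := htS hk; exact b.2
      set t' : Finset ↥L := t.attach.image (fun k => ⟨k.1, hmemL k.1 k.2⟩) with ht'
      refine ⟨t', ?_, ?_⟩
      · intro b hb
        simp only [ht', Finset.coe_image, Set.mem_image] at hb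
        obtain ⟨k, _, rfl⟩ := hb
        obtain ⟨b', hb', hb'k⟩ := htS k.2
        have hbk : b' = ⟨k.1, hmemL k.1 k.2⟩ := Subtype.ext hb'k
        exact hbk ▸ hb'
      · -- a ≤ sup t'
        have hts : (t.sup id : K) ≤ ((t'.sup id : ↥L) : K) := by
          apply Finset.sup_le
          intro k hk
          have : inst.le ⟨k, hmemL k hk⟩ (t'.sup id) := by
            apply Finset.le_sup (f := id)
            exact Finset.mem_image.mpr ⟨⟨k, hk⟩, Finset.mem_attach _ _, rfl⟩
          exact (hord _ _).mp this
        have : (a : K) ≤ ((t'.sup id : ↥L) : K) := by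
          rw [hax]
          exact sInf_le ⟨(t'.sup id : ↥L).2, le_trans htx hts⟩
        exact (hord _ _).mpr this
end

section
/- Let λ be an infinite type and let κ = 2^#λ. Then there exists a 2^#λ-branching independent composition engine on λ, i.e., a family {f_{(η,φ)} : (η,φ) ∈ Λ_κ} of permutations of λ indexed by Λ_κ satisfying: (i) for all (η,φ) ∈ Λ_κ and all α ∈ κ, f_{(η,φ)} = f_{(η*α, φ*0)} ∘ f_{(η*α, φ*1)}; (ii) for all a, b ∈ Λ_κ, f_a ∘ f_b = f_b ∘ f_a; (iii) whenever P and Q are reduced finite lists of elements of Λ_κ (possibly empty) that are not permutations of each other, the composites t_P and t_Q are distinct functions (the composite of the empty list being the identity). -/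
/-- `Λ_κ`: the set of pairs `(η, φ)` of sequences of equal finite length `n ≥ 1` with entries
in `I` (a type of cardinality `κ`) and in `2` respectively, coded as nonempty lists of pairs. -/
abbrev Lam (I : Type u) : Type u := {l : List (I × Bool) // l ≠ []}

/-- `(η * a, φ * b)`: extension of the pair of sequences `p` by the entries `a` and `b`. -/
def Lam.ext {I : Type u} (p : Lam I) (a : I) (b : Bool) : Lam I :=
  ⟨p.val ++ [(a, b)], by simp⟩

/-- A finite list of elements of `Λ_κ` is reduced iff it does not contain both
`(η * a, φ * 0)` and `(η * a, φ * 1)` for any `(η, φ) ∈ Λ_κ` and `a`. -/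
def Reduced {I : Type u} (P : List (Lam I)) : Prop :=
  ¬ ∃ (p : Lam I) (a : I), Lam.ext p a false ∈ P ∧ Lam.ext p a true ∈ P

namespace ICE
variable {I : Type u}

/-- `p` is `x` followed by a (possibly empty) all-`false` tail. -/
def ZE (x p : Lam I) : Prop :=
  ∃ t : List (I × Bool), (∀ e ∈ t, e.2 = false) ∧ p.val = x.val ++ t

lemma ZE.refl (x : Lam I) : ZE x x := ⟨[], by simp⟩

lemma ZE.length {x p : Lam I} (h : ZE x p) : x.val.length ≤ p.val.length := by
  obtain ⟨t, -, h⟩ := h; simp [h]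

lemma ZE.eq_of_length {x p : Lam I} (h : ZE x p) (hl : p.val.length ≤ x.val.length) :
    x = p := by
  obtain ⟨t, -, h⟩ := h
  have : t = [] := by
    have := congrArg List.length h
    simp at this
    exact List.eq_nil_of_length_eq_zero (by omega)
  subst this; exact Subtype.ext (by simp [h])

lemma ZE.take {x p : Lam I} (h : ZE x p) : x.val = p.val.take x.val.length := by
  obtain ⟨t, -, h⟩ := h; simp [h]

lemma ZE_ext_false {b p : Lam I} {a : I} :
    ZE b (Lam.ext p a false) ↔ ZE b p ∨ b = Lam.ext p a false := by
  constructor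
  · rintro ⟨t, ht, hv⟩
    rcases t.eq_nil_or_concat with rfl | ⟨t', e, rfl⟩
    · right; exact Subtype.ext (by simpa using hv.symm)
    · left
      refine ⟨t', fun e' he' => ht e' (by simp [he']), ?_⟩
      have : p.val ++ [(a, false)] = (b.val ++ t') ++ [e] := by
        simpa [Lam.ext, List.append_assoc] using hv
      exact (List.append_inj' this (by simp)).1
  · rintro (⟨t, ht, hv⟩ | rfl)
    · refine ⟨t ++ [(a, false)], ?_, by simp [Lam.ext, hv]⟩
      intro e he
      rcases List.mem_append.1 he with he | he
      · exact ht e he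
      · simp at he; simp [he]
    · exact ZE.refl _

lemma ZE_ext_true {b p : Lam I} {a : I} :
    ZE b (Lam.ext p a true) ↔ b = Lam.ext p a true := by
  constructor
  · rintro ⟨t, ht, hv⟩
    rcases t.eq_nil_or_concat with rfl | ⟨t', e, rfl⟩
    · exact Subtype.ext (by simpa using hv.symm)
    · have : p.val ++ [(a, true)] = (b.val ++ t') ++ [e] := by
        simpa [Lam.ext, List.append_assoc] using hv
      have h2 : [(a, true)] = [e] := (List.append_inj' this (by simp)).2
      have he : e = (a, true) := by simpa using h2.symm
      have := ht e (by simp)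
      rw [he] at this; simp at this
  · rintro rfl; exact ZE.refl _

end ICE

namespace ICE
variable {I : Type u}

lemma ZE_of_ZE_ext {x p : Lam I} {a : I} (h : ZE (Lam.ext x a false) p) : ZE x p := by
  obtain ⟨t, ht, hv⟩ := h
  refine ⟨(a, false) :: t, ?_, by simpa [Lam.ext] using hv⟩
  intro e he
  rcases List.mem_cons.1 he with rfl | he
  · rfl
  · exact ht e he

lemma ZE_ext_branch_eq {x p : Lam I} {a b : I} (h1 : ZE (Lam.ext x a false) p)
    (h2 : ZE (Lam.ext x b false) p) : a = b := by
  obtain ⟨t, -, hv⟩ := h1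
  obtain ⟨s, -, hw⟩ := h2
  simp only [Lam.ext, List.append_assoc, List.singleton_append] at hv hw
  have : x.val ++ ((a, false) :: t) = x.val ++ ((b, false) :: s) := hv.symm.trans hw
  have := (List.append_cancel_left this :)
  simpa using congrArg List.head? this

lemma ZE_strict {x p : Lam I} (h : ZE x p) (hne : x ≠ p) :
    ∃ b : I, ZE (Lam.ext x b false) p ∧ (p.val[x.val.length]?) = some (b, false) := by
  obtain ⟨t, ht, hv⟩ := h
  rcases t with _ | ⟨e, t'⟩
  · exact absurd (Subtype.ext (by simp [hv])) hne
  · have he : e.2 = false := ht e (by simp)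
    refine ⟨e.1, ⟨t', fun e' he' => ht e' (by simp [he']), ?_⟩, ?_⟩
    · simp [Lam.ext, hv, ← he]
    · rw [hv, List.getElem?_append_right (le_refl _)]
      simp [← he]

/-- the last bit of `p`. -/
def lastB (p : Lam I) : Bool := (p.val.getLast p.prop).2
/-- the last index of `p`. -/
def lastA (p : Lam I) : I := (p.val.getLast p.prop).1
/-- `p` with its last bit replaced. -/
def setLast (p : Lam I) (v : Bool) : Lam I := ⟨p.val.dropLast ++ [(lastA p, v)], by simp⟩

@[simp] lemma lastB_mk (l : List (I × Bool)) (a : I) (b : Bool) (h) :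
    lastB (⟨l ++ [(a, b)], h⟩ : Lam I) = b := by
  simp [lastB, List.getLast_append_singleton]

@[simp] lemma lastA_mk (l : List (I × Bool)) (a : I) (b : Bool) (h) :
    lastA (⟨l ++ [(a, b)], h⟩ : Lam I) = a := by
  simp [lastA, List.getLast_append_singleton]

@[simp] lemma lastB_ext (p : Lam I) (a : I) (b : Bool) : lastB (Lam.ext p a b) = b := by
  simp [lastB, Lam.ext]

@[simp] lemma lastA_ext (p : Lam I) (a : I) (b : Bool) : lastA (Lam.ext p a b) = a := by
  simp [lastA, Lam.ext]

@[simp] lemma length_ext (p : Lam I) (a : I) (b : Bool) :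
    (Lam.ext p a b).val.length = p.val.length + 1 := by simp [Lam.ext]

@[simp] lemma setLast_ext (p : Lam I) (a : I) (b v : Bool) :
    setLast (Lam.ext p a b) v = Lam.ext p a v := by
  simp [setLast, Lam.ext]

@[simp] lemma setLast_lastB (p : Lam I) : setLast p (lastB p) = p := by
  refine Subtype.ext ?_
  simp only [setLast, lastB, lastA]
  exact List.dropLast_append_getLast p.prop

@[simp] lemma length_setLast (p : Lam I) (v : Bool) :
    (setLast p v).val.length = p.val.length := by
  have h1 : 1 ≤ p.val.length := List.length_pos_iff.2 p.prop
  simp [setLast]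
  omega

@[simp] lemma lastB_setLast (p : Lam I) (v : Bool) : lastB (setLast p v) = v := by
  simp [lastB, setLast, List.getLast_append_singleton]

@[simp] lemma lastA_setLast (p : Lam I) (v : Bool) : lastA (setLast p v) = lastA p := by
  simp [lastA, setLast, List.getLast_append_singleton]

@[simp] lemma setLast_setLast (p : Lam I) (v w : Bool) :
    setLast (setLast p v) w = setLast p w := by
  refine Subtype.ext ?_
  simp [setLast, List.dropLast_concat, List.getLast_append_singleton]

lemma exists_eq_ext {p : Lam I} (h : 2 ≤ p.val.length) :
    ∃ (w : Lam I) (a : I) (b : Bool), p = Lam.ext w a b := by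
  rcases p.val.eq_nil_or_concat with h0 | ⟨l, e, hl⟩
  · exact absurd h0 p.prop
  · have hlne : l ≠ [] := by
      rintro rfl; rw [hl] at h; simp at h
    exact ⟨⟨l, hlne⟩, e.1, e.2, Subtype.ext (by simp [Lam.ext, hl])⟩

end ICE

namespace ICE
variable {I : Type u}

open Classical in
/-- coefficient of basis element `b` in the group element assigned to `p`. -/
noncomputable def cf (p b : Lam I) : ℤ :=
  (if (lastB b = true ∨ b.val.length = 1) ∧ ZE b p then 1 else 0)
  - (if lastB b = true ∧ 2 ≤ b.val.length ∧ ZE (setLast b false) p then 1 else 0)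

lemma ne_of_lastB {x y : Lam I} (h : lastB x ≠ lastB y) : x ≠ y := fun e => h (by rw [e])

lemma one_le_length (p : Lam I) : 1 ≤ p.val.length := List.length_pos_iff.2 p.prop

open Classical in
lemma cf_rel (p : Lam I) (a : I) (b : Lam I) :
    cf p b = cf (Lam.ext p a false) b + cf (Lam.ext p a true) b := by
  have hne01 : Lam.ext p a false ≠ Lam.ext p a true := ne_of_lastB (by simp)
  by_cases hb1 : b = Lam.ext p a true
  · have hlast : lastB b = true := by rw [hb1]; simp
    have hlenb : b.val.length = p.val.length + 1 := by rw [hb1]; simp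
    have hlensb : (setLast b false).val.length = p.val.length + 1 := by simp [hlenb]
    have h1 : ¬ ZE b p := fun h => by have := h.length; omega
    have h2 : ¬ ZE (setLast b false) p := fun h => by have := h.length; omega
    have h3 : ¬ ZE b (Lam.ext p a false) := fun h =>
      hne01 (((h.eq_of_length (by simp; omega)).symm.trans hb1) ▸ rfl)
    have h4 : setLast b false = Lam.ext p a false := by rw [hb1]; simp
    have h5 : ZE b (Lam.ext p a true) := hb1 ▸ ZE.refl _
    have h6 : ¬ ZE (setLast b false) (Lam.ext p a true) := by
      rw [h4]; exact fun h => hne01 (h.eq_of_length (by simp))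
    have hlen : 2 ≤ b.val.length := by have := one_le_length p; omega
    have h2' : ¬ ZE (Lam.ext p a false) p := h4 ▸ h2
    have h6' : ¬ ZE (Lam.ext p a false) (Lam.ext p a true) := h4 ▸ h6
    simp only [cf, h1, h2, h3, h4, h5, h6, h2', h6', hlast, hlen, ZE.refl]
    simp
  · by_cases hb0 : b = Lam.ext p a false
    · have hlast : lastB b = false := by rw [hb0]; simp
      have hlenb : b.val.length = p.val.length + 1 := by rw [hb0]; simp
      have h1 : ¬ ZE b p := fun h => by have := h.length; omega
      have hlen1 : b.val.length ≠ 1 := by have := one_le_length p; omega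
      have h3 : ZE b (Lam.ext p a false) := hb0 ▸ ZE.refl _
      have h4 : ¬ ZE b (Lam.ext p a true) := fun h => hb1 (ZE_ext_true.1 h)
      simp [cf, hlast, hlen1, h1, h3, h4]
    · have e1 : ZE b (Lam.ext p a false) ↔ ZE b p := by
        rw [ZE_ext_false]; simp [hb0]
      have e2 : ¬ ZE b (Lam.ext p a true) := fun h => hb1 (ZE_ext_true.1 h)
      have e3 : ¬ ZE (setLast b false) (Lam.ext p a true) := fun h => by
        have h' := ZE_ext_true.1 h
        have : lastB (setLast b false) = true := by rw [h']; simp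
        simp at this
      have e4 : lastB b = true → setLast b false ≠ Lam.ext p a false := by
        intro hl hsb
        apply hb1
        have h' : setLast (setLast b false) true = setLast (Lam.ext p a false) true := by
          rw [hsb]
        simpa [← hl] using h'
      have e5 : (lastB b = true ∧ 2 ≤ b.val.length ∧ ZE (setLast b false) (Lam.ext p a false))
          ↔ (lastB b = true ∧ 2 ≤ b.val.length ∧ ZE (setLast b false) p) := by
        constructor
        · rintro ⟨hl, hlen, hz⟩
          refine ⟨hl, hlen, ?_⟩
          rw [ZE_ext_false] at hz
          rcases hz with hz | hz
          · exact hz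
          · exact absurd hz (e4 hl)
        · rintro ⟨hl, hlen, hz⟩
          exact ⟨hl, hlen, by rw [ZE_ext_false]; exact Or.inl hz⟩
      simp only [cf, e1, e2, e3, e5]
      simp
end ICE

namespace ICE
variable {I : Type u}
open Classical

/-- count of `p ∈ P` that are zero-extensions of `x`, as an integer. -/
noncomputable def gz (P : List (Lam I)) (x : Lam I) : ℤ :=
  ((P.countP fun p => decide (ZE x p) : ℕ) : ℤ)

noncomputable def mz (P : List (Lam I)) (x : Lam I) : ℤ :=
  ((P.count x : ℕ) : ℤ)

@[simp] lemma gz_nil (x : Lam I) : gz [] x = 0 := by simp [gz]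

lemma gz_cons (p : Lam I) (P : List (Lam I)) (x : Lam I) :
    gz (p :: P) x = gz P x + (if ZE x p then 1 else 0) := by
  by_cases h : ZE x p <;> simp [gz, List.countP_cons, h]

lemma gz_nonneg (P : List (Lam I)) (x : Lam I) : 0 ≤ gz P x := Int.natCast_nonneg _

lemma cfsum (P : List (Lam I)) (b : Lam I) :
    (P.map (fun p => cf p b)).sum =
      (if (lastB b = true ∨ b.val.length = 1) then gz P b else 0)
      - (if (lastB b = true ∧ 2 ≤ b.val.length) then gz P (setLast b false) else 0) := by
  induction P with
  | nil => simp
  | cons p P ih =>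
    rw [List.map_cons, List.sum_cons, ih]
    by_cases h1 : (lastB b = true ∨ b.val.length = 1) <;>
      by_cases h2 : (lastB b = true ∧ 2 ≤ b.val.length) <;>
      by_cases hz1 : ZE b p <;>
      by_cases hz2 : ZE (setLast b false) p <;>
      simp [cf, h1, h2, hz1, hz2, gz_cons] <;> ring

lemma gz_decomp (P : List (Lam I)) (x : Lam I) (S : Finset I)
    (hS : ∀ p ∈ P, ∀ e ∈ p.val, e.1 ∈ S) :
    gz P x = mz P x + ∑ b ∈ S, gz P (Lam.ext x b false) := by
  induction P with
  | nil => simp [mz]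
  | cons p P ih =>
    have hS' : ∀ p ∈ P, ∀ e ∈ p.val, e.1 ∈ S := fun q hq => hS q (by simp [hq])
    have key : (if ZE x p then (1 : ℤ) else 0)
        = (if x = p then 1 else 0) + ∑ b ∈ S, (if ZE (Lam.ext x b false) p then 1 else 0) := by
      by_cases hz : ZE x p
      · by_cases hxp : x = p
        · subst hxp
          have : ∀ b ∈ S, (if ZE (Lam.ext x b false) x then (1:ℤ) else 0) = 0 := by
            intro b _
            rw [if_neg]
            intro h
            have := h.length; simp at this
          rw [Finset.sum_congr rfl this]
          simp [ZE.refl]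
        · obtain ⟨b0, hb0, hget⟩ := ZE_strict hz hxp
          have hb0mem : b0 ∈ S := by
            have : (b0, false) ∈ p.val := List.mem_of_getElem? hget
            exact hS p (by simp) _ this
          rw [Finset.sum_eq_single_of_mem b0 hb0mem]
          · simp [hz, hxp, hb0]
          · intro b hb hne
            rw [if_neg]
            intro h
            exact hne (ZE_ext_branch_eq h hb0)
      · have hxp : ¬ x = p := fun h => hz (h ▸ ZE.refl x)
        have : ∀ b ∈ S, (if ZE (Lam.ext x b false) p then (1:ℤ) else 0) = 0 := by
          intro b _
          rw [if_neg]
          exact fun h => hz (ZE_of_ZE_ext h)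
        rw [Finset.sum_congr rfl this]
        simp [hz, hxp]
    have hmz : mz (p :: P) x = mz P x + (if x = p then 1 else 0) := by
      by_cases h : x = p <;> simp [mz, List.count_cons, h]
      exact fun h' => h (Subtype.ext h'.symm)
    rw [gz_cons, hmz, ih hS', key]
    rw [Finset.sum_congr rfl (fun b _ => gz_cons p P (Lam.ext x b false))]
    rw [Finset.sum_add_distrib]
    ring

end ICE

namespace ICE
variable {I : Type u}
open Classical

lemma foldr_max_le {l : List ℕ} {n : ℕ} (h : n ∈ l) : n ≤ l.foldr max 0 := by
  induction l with
  | nil => simp at h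
  | cons m l ih =>
    rcases List.mem_cons.1 h with rfl | h
    · exact le_max_left _ _
    · exact le_trans (ih h) (le_max_right _ _)

lemma gz_eq_zero {P : List (Lam I)} {x : Lam I}
    (h : ∀ p ∈ P, p.val.length < x.val.length) : gz P x = 0 := by
  have : P.countP (fun p => decide (ZE x p)) = 0 := by
    rw [List.countP_eq_zero]
    intro p hp
    simp only [decide_eq_true_eq]
    intro hz
    exact absurd hz.length (by have := h p hp; omega)
  simp [gz, this]

lemma gz_pos_of_mem {P : List (Lam I)} {x : Lam I} (h : x ∈ P) : 1 ≤ gz P x := by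
  have : 0 < P.countP (fun p => decide (ZE x p)) := by
    rw [List.countP_pos_iff]
    exact ⟨x, h, by simp [ZE.refl]⟩
  simp only [gz]
  omega

lemma mz_pos_mem {P : List (Lam I)} {x : Lam I} (h : 1 ≤ mz P x) : x ∈ P := by
  have : 0 < P.count x := by simp only [mz] at h; omega
  exact List.count_pos_iff.1 this

/-- Lemma C: equal coefficient sums plus reducedness imply equal `gz` everywhere. -/
lemma gz_eq_of_coeffs (P Q : List (Lam I)) (hP : Reduced P) (hQ : Reduced Q)
    (h1 : ∀ b : Lam I, b.val.length = 1 → gz P b = gz Q b)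
    (h2 : ∀ b : Lam I, lastB b = true → 2 ≤ b.val.length →
      gz P b - gz P (setLast b false) = gz Q b - gz Q (setLast b false)) :
    ∀ x, gz P x = gz Q x := by
  set L : ℕ := ((P ++ Q).map (fun p => p.val.length)).foldr max 0 with hL
  have hbound : ∀ p ∈ P ++ Q, p.val.length ≤ L :=
    fun p hp => foldr_max_le (List.mem_map_of_mem hp)
  set S : Finset I := ((P ++ Q).flatMap (fun p => p.val.map Prod.fst)).toFinset with hS
  have hSP : ∀ R : List (Lam I), (∀ p ∈ R, p ∈ P ++ Q) →
      ∀ p ∈ R, ∀ e ∈ p.val, e.1 ∈ S := by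
    intro R hR p hp e he
    rw [hS, List.mem_toFinset, List.mem_flatMap]
    exact ⟨p, hR p hp, List.mem_map_of_mem he⟩
  have hSP' := hSP P (fun p hp => List.mem_append_left _ hp)
  have hSQ' := hSP Q (fun p hp => List.mem_append_right _ hp)
  have main : ∀ k x, L + 1 ≤ x.val.length + k → gz P x = gz Q x := by
    intro k
    induction k with
    | zero =>
      intro x hx
      rw [gz_eq_zero, gz_eq_zero] <;>
        exact fun p hp => by
          have := hbound p (by simp [hp]); omega
    | succ k ih =>
      intro x hx
      by_cases hxk : L + 1 ≤ x.val.length + k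
      · exact ih x hxk
      have hx1 := one_le_length x
      rcases Nat.lt_or_ge x.val.length 2 with hlt | hge
      · exact h1 x (by omega)
      obtain ⟨w, a, bb, hxw⟩ := exists_eq_ext hge
      have hext : ∀ v : Bool, ∀ c : I,
          gz P (Lam.ext (Lam.ext w a v) c false) = gz Q (Lam.ext (Lam.ext w a v) c false) := by
        intro v c
        apply ih
        have : (Lam.ext (Lam.ext w a v) c false).val.length = x.val.length + 1 := by
          rw [hxw]; simp
        omega
      have hdec : ∀ v : Bool,
          gz P (Lam.ext w a v) - gz Q (Lam.ext w a v)
            = mz P (Lam.ext w a v) - mz Q (Lam.ext w a v) := by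
        intro v
        rw [gz_decomp P _ S hSP', gz_decomp Q _ S hSQ']
        rw [Finset.sum_congr rfl (fun c _ => hext v c)]
        ring
      have hlen1 : 2 ≤ (Lam.ext w a true).val.length := by
        have := one_le_length w; simp; omega
      have heq := h2 (Lam.ext w a true) (by simp) hlen1
      rw [setLast_ext] at heq
      have hd01 : mz P (Lam.ext w a false) - mz Q (Lam.ext w a false)
          = mz P (Lam.ext w a true) - mz Q (Lam.ext w a true) := by
        have e0 := hdec false
        have e1 := hdec true
        omega
      have hzero : mz P (Lam.ext w a false) - mz Q (Lam.ext w a false) = 0 := by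
        by_contra hne
        rcases lt_or_gt_of_ne hne with hlt' | hgt'
        · -- Q contains both
          have m0 : 1 ≤ mz Q (Lam.ext w a false) := by
            have := Int.natCast_nonneg (P.count (Lam.ext w a false)); simp only [mz] at *; omega
          have m1 : 1 ≤ mz Q (Lam.ext w a true) := by
            have := Int.natCast_nonneg (P.count (Lam.ext w a true)); simp only [mz] at *; omega
          exact hQ ⟨w, a, mz_pos_mem m0, mz_pos_mem m1⟩
        · have m0 : 1 ≤ mz P (Lam.ext w a false) := by
            have := Int.natCast_nonneg (Q.count (Lam.ext w a false)); simp only [mz] at *; omega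
          have m1 : 1 ≤ mz P (Lam.ext w a true) := by
            have := Int.natCast_nonneg (Q.count (Lam.ext w a true)); simp only [mz] at *; omega
          exact hP ⟨w, a, mz_pos_mem m0, mz_pos_mem m1⟩
      have hfin : ∀ v : Bool, gz P (Lam.ext w a v) = gz Q (Lam.ext w a v) := by
        intro v
        have := hdec v
        cases v <;> omega
      rw [hxw]; exact hfin bb
  intro x
  exact main (L + 1) x (by omega)

lemma exists_max_len (l : List (Lam I)) (h : l ≠ []) :
    ∃ p ∈ l, ∀ q ∈ l, q.val.length ≤ p.val.length := by
  induction l with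
  | nil => simp at h
  | cons p l ih =>
    rcases l.eq_nil_or_concat with rfl | ⟨_, _, hl⟩
    · exact ⟨p, by simp⟩
    · have hlne : l ≠ [] := by rw [hl]; simp
      obtain ⟨m, hm, hmax⟩ := ih hlne
      rcases le_total m.val.length p.val.length with hle | hle
      · refine ⟨p, by simp, ?_⟩
        intro q hq
        rcases List.mem_cons.1 hq with rfl | hq
        · exact le_refl _
        · exact le_trans (hmax q hq) hle
      · refine ⟨m, by simp [hm], ?_⟩
        intro q hq
        rcases List.mem_cons.1 hq with rfl | hq
        · exact hle
        · exact hmax q hq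

lemma gz_erase (P : List (Lam I)) {p0 : Lam I} (h : p0 ∈ P) (x : Lam I) :
    gz (P.erase p0) x = gz P x - (if ZE x p0 then 1 else 0) := by
  have hperm : P.Perm (p0 :: P.erase p0) := List.perm_cons_erase h
  have : gz P x = gz (p0 :: P.erase p0) x := by
    simp only [gz]
    rw [hperm.countP_eq]
  rw [this, gz_cons]
  ring

/-- Lemma D: equal `gz` everywhere implies the lists are permutations. -/
lemma perm_of_gz_eq : ∀ (n : ℕ) (P Q : List (Lam I)), P.length + Q.length ≤ n →
    (∀ x, gz P x = gz Q x) → P.Perm Q := by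
  intro n
  induction n with
  | zero =>
    intro P Q hlen _
    have hP : P = [] := List.eq_nil_of_length_eq_zero (by omega)
    have hQ : Q = [] := List.eq_nil_of_length_eq_zero (by omega)
    rw [hP, hQ]
  | succ n ih =>
    intro P Q hlen hgz
    by_cases hPQ : P ++ Q = []
    · rw [List.append_eq_nil_iff] at hPQ
      rw [hPQ.1, hPQ.2]
    obtain ⟨p0, hp0, hmax⟩ := exists_max_len _ hPQ
    have hboth : ∀ (R R' : List (Lam I)), (∀ x, gz R x = gz R' x) →
        (∀ q ∈ R', q.val.length ≤ p0.val.length) → p0 ∈ R → p0 ∈ R' := by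
      intro R R' hg hm hmem
      have h1 : 1 ≤ gz R' p0 := hg p0 ▸ gz_pos_of_mem hmem
      have hpos : 0 < R'.countP (fun p => decide (ZE p0 p)) := by
        simp only [gz] at h1; omega
      obtain ⟨q, hq, hzq⟩ := List.countP_pos_iff.1 hpos
      simp only [decide_eq_true_eq] at hzq
      have : p0 = q := hzq.eq_of_length (hm q hq)
      rw [this]; exact hq
    have hmaxQ : ∀ q ∈ Q, q.val.length ≤ p0.val.length :=
      fun q hq => hmax q (List.mem_append_right _ hq)
    have hmaxP : ∀ q ∈ P, q.val.length ≤ p0.val.length :=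
      fun q hq => hmax q (List.mem_append_left _ hq)
    have hp0P : p0 ∈ P ∧ p0 ∈ Q := by
      rcases List.mem_append.1 hp0 with h | h
      · exact ⟨h, hboth P Q hgz hmaxQ h⟩
      · exact ⟨hboth Q P (fun x => (hgz x).symm) hmaxP h, h⟩
    have hperm' : (P.erase p0).Perm (Q.erase p0) := by
      apply ih
      · have h1 : (P.erase p0).length = P.length - 1 := List.length_erase_of_mem hp0P.1
        have h2 : (Q.erase p0).length = Q.length - 1 := List.length_erase_of_mem hp0P.2
        have : 1 ≤ P.length := List.length_pos_iff.2 (List.ne_nil_of_mem hp0P.1)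
        omega
      · intro x
        rw [gz_erase P hp0P.1, gz_erase Q hp0P.2, hgz x]
    exact ((List.perm_cons_erase hp0P.1).trans (hperm'.cons p0)).trans
      (List.perm_cons_erase hp0P.2).symm
end ICE

namespace ICE
variable {I : Type u}
open Classical

def tk (p : Lam I) (k : ℕ) : Lam I :=
  ⟨p.val.take (k + 1), by simp [List.take_eq_nil_iff, p.prop]⟩

noncomputable def supS (p : Lam I) : Finset (Lam I) :=
  ((Finset.range p.val.length).image fun k => tk p k) ∪
    ((Finset.range p.val.length).image fun k => setLast (tk p k) true)

lemma eq_tk_of_ZE {b p : Lam I} (h : ZE b p) : b = tk p (b.val.length - 1) := by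
  have h1 := one_le_length b
  have ht : b.val.length - 1 + 1 = b.val.length := by omega
  apply Subtype.ext
  show b.val = p.val.take (b.val.length - 1 + 1)
  rw [ht]
  exact h.take

lemma mem_supS_of_cf {p b : Lam I} (h : cf p b ≠ 0) : b ∈ supS p := by
  have h1 := one_le_length b
  by_cases c1 : (lastB b = true ∨ b.val.length = 1) ∧ ZE b p
  · apply Finset.mem_union_left
    rw [Finset.mem_image]
    refine ⟨b.val.length - 1, Finset.mem_range.2 ?_, (eq_tk_of_ZE c1.2).symm⟩
    have := c1.2.length
    omega
  by_cases c2 : lastB b = true ∧ 2 ≤ b.val.length ∧ ZE (setLast b false) p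
  · apply Finset.mem_union_right
    rw [Finset.mem_image]
    have hsb := eq_tk_of_ZE c2.2.2
    refine ⟨b.val.length - 1, Finset.mem_range.2 ?_, ?_⟩
    · have := c2.2.2.length
      simp at this
      omega
    · have : (setLast b false).val.length - 1 = b.val.length - 1 := by simp
      rw [← this, ← hsb, setLast_setLast, ← c2.1, setLast_lastB]
  · exact absurd (by simp [cf, c1, c2]) h

noncomputable def c (p : Lam I) : Lam I →₀ ℤ :=
  Finsupp.onFinset (supS p) (cf p) (fun _ h => mem_supS_of_cf h)

@[simp] lemma c_apply (p b : Lam I) : c p b = cf p b := rfl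

lemma c_rel (p : Lam I) (a : I) : c p = c (Lam.ext p a false) + c (Lam.ext p a true) := by
  ext b
  simp [cf_rel p a b]

lemma csum_apply (P : List (Lam I)) (b : Lam I) :
    ((P.map c).sum) b = (P.map fun p => cf p b).sum := by
  induction P with
  | nil => simp
  | cons p P ih => simp [ih]

end ICE

namespace ICE
open Cardinal

/-- fiberwise translation permutation of `β × ℚ`. -/
def tr {β : Type u} (v : β → ℚ) : Equiv.Perm (β × ℚ) where
  toFun z := (z.1, z.2 + v z.1)
  invFun z := (z.1, z.2 - v z.1)
  left_inv z := by simp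
  right_inv z := by simp

lemma tr_add {β : Type u} (v w : β → ℚ) : tr (v + w) = tr v * tr w := by
  apply Equiv.ext
  intro z
  simp [tr, Equiv.Perm.mul_apply]
  ring

lemma tr_inj {β : Type u} : Function.Injective (tr (β := β)) := by
  intro v w h
  funext x
  have := congrArg (fun σ : Equiv.Perm (β × ℚ) => (σ (x, 0)).2) h
  simpa [tr] using this

lemma permCongr_mul {β γ : Type u} (e : β ≃ γ) (σ τ : Equiv.Perm β) :
    e.permCongr (σ * τ) = e.permCongr σ * e.permCongr τ := by
  apply Equiv.ext
  intro x
  simp [Equiv.permCongr_apply, Equiv.Perm.mul_apply]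

end ICE


/-- there exists a `2 ^ #λ`-branching independent composition engine on an infinite
`λ`: a family of permutations `f_p` (`p ∈ Λ_κ`, `κ = 2 ^ #λ`) such that (i)
`f_(η,φ) = f_(η*a,φ*0) ∘ f_(η*a,φ*1)`, (ii) all `f_p` commute, and (iii) composites of reduced
lists that are not permutations of each other are distinct. -/
theorem exists_ICE (α : Type u) [Infinite α] (I : Type u)
    (hI : Cardinal.mk I = 2 ^ Cardinal.mk α) :
    ∃ f : Lam I → Equiv.Perm α,
      (∀ (p : Lam I) (a : I), f p = f (Lam.ext p a false) * f (Lam.ext p a true)) ∧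
      (∀ p q : Lam I, f p * f q = f q * f p) ∧
      (∀ P Q : List (Lam I), Reduced P → Reduced Q → ¬ P.Perm Q →
        (P.map f).prod ≠ (Q.map f).prod) := by
  classical
  open Cardinal ICE in
  have hα : ℵ₀ ≤ #α := aleph0_le_mk α
  have h2a : (2 : Cardinal) ≤ ℵ₀ := by
    have := nat_lt_aleph0 2
    exact_mod_cast this.le
  have hIinf : ℵ₀ ≤ #I := by
    rw [hI]
    calc ℵ₀ ≤ 2 ^ ℵ₀ := (cantor ℵ₀).le
      _ ≤ 2 ^ #α := power_le_power_left (by norm_num) hα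
  haveI : Infinite I := infinite_iff.2 hIinf
  have hLam : #(Lam I) = 2 ^ #α := by
    apply le_antisymm
    · calc #(Lam I) ≤ #(List (I × Bool)) := mk_subtype_le _
        _ = #(I × Bool) := mk_list_eq_mk _
        _ = #I * 2 := by simp [mk_prod]
        _ = #I := mul_eq_left hIinf (h2a.trans hIinf) two_ne_zero
        _ = 2 ^ #α := hI
    · rw [← hI]
      exact mk_le_of_injective (f := fun i : I => (⟨[(i, false)], by simp⟩ : Lam I))
        (fun i j h => by simpa using h)
  have hrank : Module.rank ℚ (α → ℚ) = 2 ^ #α := by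
    rw [rank_fun_infinite, mk_arrow]
    have : #ℚ = ℵ₀ := mk_denumerable ℚ
    rw [this]
    simp only [lift_aleph0, lift_id, lift_uzero]
    apply le_antisymm
    · calc ℵ₀ ^ #α ≤ (2 ^ ℵ₀) ^ #α := power_le_power_right (cantor ℵ₀).le
        _ = 2 ^ (ℵ₀ * #α) := (power_mul).symm
        _ = 2 ^ #α := by rw [mul_eq_max (le_refl _) hα, max_eq_right hα]
    · exact power_le_power_right h2a
  let bW := Module.Basis.ofVectorSpace ℚ (α → ℚ)
  have hb : #(Module.Basis.ofVectorSpaceIndex ℚ (α → ℚ)) = #(Lam I) := by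
    rw [bW.mk_eq_rank'', hrank, hLam]
  obtain ⟨e⟩ : Nonempty (Lam I ≃ Module.Basis.ofVectorSpaceIndex ℚ (α → ℚ)) := Cardinal.eq.1 hb.symm
  obtain ⟨e2⟩ : Nonempty (α × ℚ ≃ α) := by
    apply Cardinal.eq.1
    rw [mk_prod, mk_denumerable ℚ]
    simp only [lift_aleph0, lift_id, lift_uzero]
    exact mul_eq_left hα hα aleph0_ne_zero
  let ψ1 : (Lam I →₀ ℤ) →+ (Lam I →₀ ℚ) := Finsupp.mapRange.addMonoidHom (Int.castAddHom ℚ)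
  let ψ2 : (Lam I →₀ ℚ) ≃ₗ[ℚ] ((Module.Basis.ofVectorSpaceIndex ℚ (α → ℚ)) →₀ ℚ) :=
    Finsupp.domLCongr e
  let Φ : (Lam I →₀ ℤ) → Equiv.Perm α :=
    fun v => (Equiv.permCongr e2) (tr (bW.repr.symm (ψ2 (ψ1 v))))
  have Φ_add : ∀ v w, Φ (v + w) = Φ v * Φ w := by
    intro v w
    have h1 : bW.repr.symm (ψ2 (ψ1 (v + w)))
        = bW.repr.symm (ψ2 (ψ1 v)) + bW.repr.symm (ψ2 (ψ1 w)) := by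
      rw [map_add, map_add, map_add]
    show (Equiv.permCongr e2) (tr (bW.repr.symm (ψ2 (ψ1 (v + w))))) = _
    rw [h1, tr_add, permCongr_mul]
  have Φ_inj : Function.Injective Φ := by
    intro v w h
    have h1 := (Equiv.permCongr e2).injective h
    have h2 := tr_inj h1
    have h3 : ψ2 (ψ1 v) = ψ2 (ψ1 w) := bW.repr.symm.injective (by
      exact funext fun x => congrFun h2 x)
    have h4 : ψ1 v = ψ1 w := ψ2.injective h3
    ext b
    have hb := DFunLike.congr_fun h4 b
    simp only [ψ1, Finsupp.mapRange.addMonoidHom_apply, Finsupp.mapRange_apply,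
      Int.coe_castAddHom] at hb
    exact_mod_cast hb
  refine ⟨fun p => Φ (ICE.c p), ?_, ?_, ?_⟩
  · intro p a
    show Φ (ICE.c p) = Φ (ICE.c (Lam.ext p a false)) * Φ (ICE.c (Lam.ext p a true))
    rw [ICE.c_rel p a, Φ_add]
  · intro p q
    show Φ (ICE.c p) * Φ (ICE.c q) = Φ (ICE.c q) * Φ (ICE.c p)
    rw [← Φ_add, ← Φ_add, add_comm]
  · intro P Q hP hQ hperm hcontr
    have Φ_zero : Φ 0 = 1 := by
      have h0 : Φ 0 * 1 = Φ 0 * Φ 0 := by rw [← Φ_add, add_zero, mul_one]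
      exact (mul_left_cancel h0).symm
    have hprod : ∀ R : List (Lam I), (R.map fun p => Φ (ICE.c p)).prod = Φ ((R.map ICE.c).sum) := by
      intro R
      induction R with
      | nil => simp [Φ_zero]
      | cons p R ih => simp [Φ_add, ih]
    have hsum : (P.map ICE.c).sum = (Q.map ICE.c).sum := by
      apply Φ_inj
      rw [← hprod P, ← hprod Q]
      exact hcontr
    have hco : ∀ bb : Lam I, (P.map fun p => ICE.cf p bb).sum = (Q.map fun p => ICE.cf p bb).sum := by
      intro bb
      rw [← ICE.csum_apply, ← ICE.csum_apply, hsum]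
    have h1 : ∀ bb : Lam I, bb.val.length = 1 → ICE.gz P bb = ICE.gz Q bb := by
      intro bb hlen
      have hc := hco bb
      rw [ICE.cfsum, ICE.cfsum] at hc
      have c1 : (ICE.lastB bb = true ∨ bb.val.length = 1) := Or.inr hlen
      have c2 : ¬(ICE.lastB bb = true ∧ 2 ≤ bb.val.length) := by
        rintro ⟨-, hl⟩; omega
      simpa [c1, c2] using hc
    have h2 : ∀ bb : Lam I, ICE.lastB bb = true → 2 ≤ bb.val.length →
        ICE.gz P bb - ICE.gz P (ICE.setLast bb false)
          = ICE.gz Q bb - ICE.gz Q (ICE.setLast bb false) := by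
      intro bb hl hlen
      have hc := hco bb
      rw [ICE.cfsum, ICE.cfsum] at hc
      have c1 : (ICE.lastB bb = true ∨ bb.val.length = 1) := Or.inl hl
      have c2 : (ICE.lastB bb = true ∧ 2 ≤ bb.val.length) := ⟨hl, hlen⟩
      simpa [c1, c2] using hc
    have hgz := ICE.gz_eq_of_coeffs P Q hP hQ h1 h2
    exact hperm (ICE.perm_of_gz_eq (P.length + Q.length) P Q (le_refl _) hgz)
end

section
/- Let λ be an infinite type, let κ = 2^#λ, and let {f_{(η,φ)} : (η,φ) ∈ Λ_κ} be a κ-branching independent composition engine on λ. Let L be a complete algebraic lattice, let C be the set of compact elements of L other than the smallest element, and let c : Λ_κ → C be a surjective enumeration satisfying: (1) every element of C equals c_{(⟨α⟩,⟨0⟩)} for some α < κ; (2) for all (η,φ) ∈ Λ_κ and α < κ, c_{(η,φ)} ≤ c_{(η*α, φ*0)} ∨ c_{(η*α, φ*1)}; (3) for all (η,φ) ∈ Λ_κ and all d, d' ∈ C with c_{(η,φ)} ≤ d ∨ d', there exists α < κ with d = c_{(η*α, φ*0)} and d' = c_{(η*α, φ*1)}. For an ideal I of the join-semilattice (C, ∨),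 let F(I) denote the submonoid of λ^λ generated by {f_{(η,φ)} : c_{(η,φ)} ∈ I}. Then for every nonempty family {I_u : u ∈ U} of ideals of (C, ∨): the join of the submonoids F(I_u) (in the lattice of submonoids of λ^λ) equals F(⋁_{u∈U} I_u), where ⋁_{u∈U} I_u is the smallest ideal of (C,∨) containing all I_u. -/
/-- An ideal of the join-semilattice `(C, ∨)`: a (possibly empty) subset of `C` which is
downward closed in `C` and closed under finite joins. -/
def IsIdealIn {L : Type v} [CompleteLattice L] (C J : Set L) : Prop :=
  J ⊆ C ∧ (∀ x ∈ J, ∀ y ∈ C, y ≤ x → y ∈ J) ∧ (∀ x ∈ J, ∀ y ∈ J, x ⊔ y ∈ J)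

/-- `F(J)`: the submonoid of `λ → λ` (under composition) generated by the functions `f_p` for
those indices `p` with `c_p ∈ J`. -/
def Fmon {α : Type u} {I : Type u} {L : Type v} [CompleteLattice L]
    (f : Lam I → Equiv.Perm α) (c : Lam I → L) (J : Set L) : Submonoid (Function.End α) :=
  Submonoid.closure {g : Function.End α | ∃ p : Lam I, c p ∈ J ∧ g = ⇑(f p)}

/-- The join of a family of ideals of `(C, ∨)`: the set of all `x ∈ C` below some finite join
`c₁ ⊔ ⋯ ⊔ cₙ` of elements of the union of the family. -/
def idealJoin {L : Type v} [CompleteLattice L] (C : Set L) {U : Type w} (J : U → Set L) :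
    Set L :=
  {x | x ∈ C ∧ ∃ l : List L, l ≠ [] ∧ (∀ y ∈ l, ∃ u, y ∈ J u) ∧ x ≤ l.foldr (· ⊔ ·) ⊥}

/-- given a `κ`-ICE `f` on an infinite `λ` (`κ = 2 ^ #λ`) and an enumeration `c` of
the nonbottom compact elements `C` of a complete algebraic lattice `L` with properties (1)–(3),
for every nonempty family of ideals `J u` of `(C, ∨)` the join of the submonoids `F(J u)` is
`F(⋁_u J u)`. -/
theorem sSup_Fmon (α : Type u) [Infinite α] (I : Type u)
    (hI : Cardinal.mk I = 2 ^ Cardinal.mk α)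
    (f : Lam I → Equiv.Perm α)
    (hf1 : ∀ (p : Lam I) (a : I), f p = f (Lam.ext p a false) * f (Lam.ext p a true))
    (hf2 : ∀ p q : Lam I, f p * f q = f q * f p)
    (hf3 : ∀ P Q : List (Lam I), Reduced P → Reduced Q → ¬ P.Perm Q →
      (P.map f).prod ≠ (Q.map f).prod)
    (L : Type v) [CompleteLattice L]
    (halg : ∀ x : L, sSup {d : L | IsCompactElement d ∧ d ≤ x} = x)
    (C : Set L) (hC : C = {x : L | IsCompactElement x ∧ x ≠ ⊥})
    (c : Lam I → L)
    (hcC : ∀ p, c p ∈ C) (hcsurj : ∀ x ∈ C, ∃ p, c p = x)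
    (h1 : ∀ x ∈ C, ∃ a : I, c ⟨[(a, false)], by simp⟩ = x)
    (h2 : ∀ (p : Lam I) (a : I), c p ≤ c (Lam.ext p a false) ⊔ c (Lam.ext p a true))
    (h3 : ∀ p : Lam I, ∀ d ∈ C, ∀ d' ∈ C, c p ≤ d ⊔ d' →
      ∃ a : I, d = c (Lam.ext p a false) ∧ d' = c (Lam.ext p a true))
    (U : Type w) [Nonempty U] (J : U → Set L) (hJ : ∀ u, IsIdealIn C (J u)) :
    (⨆ u, Fmon f c (J u)) = Fmon f c (idealJoin C J) := by
  -- compactness of sups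
  have supC : ∀ a b : L, IsCompactElement a →
      IsCompactElement b → IsCompactElement (a ⊔ b) := by
    intro a b ha hb
    rw [CompleteLattice.isCompactElement_iff_exists_le_sSup_of_le_sSup] at ha hb ⊢
    intro s hs
    obtain ⟨t1, ht1, ht1'⟩ := ha s (le_trans le_sup_left hs)
    obtain ⟨t2, ht2, ht2'⟩ := hb s (le_trans le_sup_right hs)
    classical
    refine ⟨t1 ∪ t2, ?_, sup_le (ht1'.trans (Finset.sup_mono Finset.subset_union_left))
      (ht2'.trans (Finset.sup_mono Finset.subset_union_right))⟩
    intro x hx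
    rcases Finset.mem_union.mp hx with h | h
    · exact ht1 h
    · exact ht2 h
  -- foldr of a nonempty list of elements of C is in C
  have foldC : ∀ l : List L, l ≠ [] → (∀ y ∈ l, y ∈ C) → l.foldr (· ⊔ ·) ⊥ ∈ C := by
    intro l
    induction l with
    | nil => intro h; exact absurd rfl h
    | cons x l ih =>
      intro _ hl
      have hx : x ∈ C := hl x (List.mem_cons_self)
      by_cases hln : l = []
      · subst hln
        rw [hC] at hx ⊢
        refine ⟨supC _ _ hx.1 ?_, ?_⟩
        · rw [CompleteLattice.isCompactElement_iff_exists_le_sSup_of_le_sSup]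
          intro s hs
          exact ⟨∅, by simp, by simpa using hs⟩
        · intro h
          exact hx.2 (sup_eq_bot_iff.mp h).1
      · have htail : l.foldr (· ⊔ ·) ⊥ ∈ C :=
          ih hln (fun y hy => hl y (List.mem_cons_of_mem _ hy))
        rw [hC] at hx htail ⊢
        exact ⟨supC _ _ hx.1 htail.1, fun h => hx.2 (sup_eq_bot_iff.mp h).1⟩
  -- key induction
  have key : ∀ l : List L, l ≠ [] → (∀ y ∈ l, ∃ u, y ∈ J u) → ∀ p : Lam I,
      c p ≤ l.foldr (· ⊔ ·) ⊥ → (⇑(f p) : Function.End α) ∈ ⨆ u, Fmon f c (J u) := by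
    intro l
    induction l with
    | nil => intro h; exact absurd rfl h
    | cons x l ih =>
      intro _ hl p hp
      obtain ⟨u, hxu⟩ := hl x (List.mem_cons_self)
      have hxC : x ∈ C := (hJ u).1 hxu
      by_cases hln : l = []
      · subst hln
        simp only [List.foldr, sup_bot_eq] at hp
        have hcp : c p ∈ J u := (hJ u).2.1 x hxu (c p) (hcC p) hp
        have : (⇑(f p) : Function.End α) ∈ Fmon f c (J u) :=
          Submonoid.subset_closure ⟨p, hcp, rfl⟩
        exact le_iSup (fun u => Fmon f c (J u)) u this
      · have hlC : ∀ y ∈ l, y ∈ C := fun y hy => ((hl y (List.mem_cons_of_mem _ hy)).choose_spec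
          |> fun h => (hJ _).1 h)
        have htail : l.foldr (· ⊔ ·) ⊥ ∈ C := foldC l hln hlC
        have hp' : c p ≤ x ⊔ l.foldr (· ⊔ ·) ⊥ := hp
        obtain ⟨a, hd, hd'⟩ := h3 p x hxC _ htail hp'
        have h0 : (⇑(f (Lam.ext p a false)) : Function.End α) ∈ ⨆ u, Fmon f c (J u) := by
          have : c (Lam.ext p a false) ∈ J u := hd ▸ hxu
          exact le_iSup (fun u => Fmon f c (J u)) u
            (Submonoid.subset_closure ⟨_, this, rfl⟩)
        have h1' : (⇑(f (Lam.ext p a true)) : Function.End α) ∈ ⨆ u, Fmon f c (J u) :=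
          ih hln (fun y hy => hl y (List.mem_cons_of_mem _ hy)) _ (hd' ▸ le_refl _)
        set g0 : Function.End α := ⇑(f (Lam.ext p a false)) with hg0
        set g1 : Function.End α := ⇑(f (Lam.ext p a true)) with hg1
        have heq : (⇑(f p) : Function.End α) = g0 * g1 := by
          rw [hg0, hg1]
          show ⇑(f p) = ⇑(f (Lam.ext p a false)) ∘ ⇑(f (Lam.ext p a true))
          rw [hf1 p a]; rfl
        rw [heq]
        exact mul_mem h0 h1'
  apply le_antisymm
  · refine iSup_le fun u => Submonoid.closure_le.mpr ?_
    rintro g ⟨p, hp, rfl⟩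
    refine Submonoid.subset_closure ⟨p, ?_, rfl⟩
    exact ⟨(hJ u).1 hp, [c p], by simp, fun y hy => ⟨u, by rw [List.mem_singleton.mp hy]; exact hp⟩,
      by simp⟩
  · refine Submonoid.closure_le.mpr ?_
    rintro g ⟨p, ⟨_, l, hlne, hlu, hle⟩, rfl⟩
    exact key l hlne hlu p hle
end

section
/- Let λ be an infinite type, let κ = 2^#λ, and let {f_{(η,φ)} : (η,φ) ∈ Λ_κ} be a κ-branching independent composition engine on λ. Let L be a complete algebraic lattice, let C be the set of compact elements of L other than the smallest element, and let c : Λ_κ → C be a surjective enumeration satisfying: (1) every element of C equals c_{(⟨α⟩,⟨0⟩)} for some α < κ; (2) for all (η,φ) ∈ Λ_κ and α < κ, c_{(η,φ)} ≤ c_{(η*α, φ*0)} ∨ c_{(η*α, φ*1)}; (3) for all (η,φ) ∈ Λ_κ and all d, d' ∈ C with c_{(η,φ)} ≤ d ∨ d', there exists α < κ with d = c_{(η*α, φ*0)} and d' = c_{(η*α, φ*1)}. For an ideal I of the join-semilattice (C, ∨), let F(I) denote the submonoid of λ^λ generated by {f_{(η,φ)} : c_{(η,φ)} ∈ I}. Then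 for every nonempty family {I_u : u ∈ U} of ideals of (C, ∨): ⋂_{u∈U} F(I_u) = F(⋂_{u∈U} I_u). -/
/-- Coercion of permutations to `Function.End` as a monoid hom. -/
def permEndHom (α : Type u) : Equiv.Perm α →* Function.End α where
  toFun g := ⇑g
  map_one' := rfl
  map_mul' _ _ := rfl

lemma permEndHom_injective (α : Type u) : Function.Injective (permEndHom α) :=
  fun _ _ h => Equiv.coe_fn_injective h

lemma ext_ne_ext {I : Type u} (p : Lam I) (a : I) :
    Lam.ext p a false ≠ Lam.ext p a true := by
  intro h
  have := congrArg Subtype.val h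
  simp [Lam.ext] at this

lemma pairwise_commute {α : Type u} {I : Type u} (f : Lam I → Equiv.Perm α)
    (hf2 : ∀ p q : Lam I, f p * f q = f q * f p) (l : List (Lam I)) :
    (l.map f).Pairwise Commute := by
  induction l with
  | nil => simp
  | cons a l ih =>
    simp only [List.map_cons, List.pairwise_cons]
    refine ⟨?_, ih⟩
    rintro x hx
    obtain ⟨q, _, rfl⟩ := List.mem_map.mp hx
    exact hf2 a q

/-- Reduction: every list of indices with compacts in an ideal `J` can be replaced by a
reduced list with the same product and compacts still in `J`. -/
lemma exists_reduced {α : Type u} {I : Type u} {L : Type v} [CompleteLattice L]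
    (f : Lam I → Equiv.Perm α)
    (hf1 : ∀ (p : Lam I) (a : I), f p = f (Lam.ext p a false) * f (Lam.ext p a true))
    (hf2 : ∀ p q : Lam I, f p * f q = f q * f p)
    (C : Set L) (c : Lam I → L) (hcC : ∀ p, c p ∈ C)
    (h2 : ∀ (p : Lam I) (a : I), c p ≤ c (Lam.ext p a false) ⊔ c (Lam.ext p a true))
    (J : Set L) (hJ : IsIdealIn C J) :
    ∀ (n : ℕ) (P : List (Lam I)), P.length = n → (∀ q ∈ P, c q ∈ J) →
      ∃ Q : List (Lam I), Reduced Q ∧ (∀ q ∈ Q, c q ∈ J) ∧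
        (Q.map f).prod = (P.map f).prod := by
  intro n
  induction n using Nat.strong_induction_on with
  | _ n ih =>
    intro P hlen hPJ
    by_cases hred : Reduced P
    · exact ⟨P, hred, hPJ, rfl⟩
    · classical
      obtain ⟨p, a, h0, h1⟩ := not_not.mp hred
      set x := Lam.ext p a false with hxdef
      set y := Lam.ext p a true with hydef
      have hxy : x ≠ y := ext_ne_ext p a
      have hy' : y ∈ P.erase x := (List.mem_erase_of_ne hxy.symm).mpr h1
      set R := (P.erase x).erase y with hRdef
      have hperm : P.Perm (x :: y :: R) :=
        (List.perm_cons_erase h0).trans (List.Perm.cons x (List.perm_cons_erase hy'))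
      have hlenP : P.length = R.length + 2 := by
        have := hperm.length_eq
        simpa using this
      -- product of P equals f x * f y * prod R
      have hprodP : (P.map f).prod = ((x :: y :: R).map f).prod :=
        (hperm.map f).prod_eq' (pairwise_commute f hf2 P)
      have hcp : c p ∈ J := by
        have hxJ : c x ∈ J := hPJ x h0
        have hyJ : c y ∈ J := hPJ y h1
        have hjoin : c x ⊔ c y ∈ J := hJ.2.2 _ hxJ _ hyJ
        exact hJ.2.1 _ hjoin _ (hcC p) (h2 p a)
      have hQJ : ∀ q ∈ (p :: R), c q ∈ J := by
        intro q hq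
        rcases List.mem_cons.mp hq with rfl | hq
        · exact hcp
        · exact hPJ q (List.mem_of_mem_erase (List.mem_of_mem_erase hq))
      have hprodQ : ((p :: R).map f).prod = (P.map f).prod := by
        rw [hprodP]
        simp only [List.map_cons, List.prod_cons]
        rw [← mul_assoc, ← hf1 p a]
      have hlt : (p :: R).length < n := by
        simp only [List.length_cons]
        omega
      obtain ⟨Q, hQred, hQJ', hQprod⟩ := ih _ hlt (p :: R) rfl hQJ
      exact ⟨Q, hQred, hQJ', hQprod.trans hprodQ⟩

/-- Every element of `Fmon f c J` is the (coerced) product of a reduced list of indices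
whose compacts lie in `J`. -/
lemma exists_reduced_of_mem_Fmon {α : Type u} {I : Type u} {L : Type v} [CompleteLattice L]
    (f : Lam I → Equiv.Perm α)
    (hf1 : ∀ (p : Lam I) (a : I), f p = f (Lam.ext p a false) * f (Lam.ext p a true))
    (hf2 : ∀ p q : Lam I, f p * f q = f q * f p)
    (C : Set L) (c : Lam I → L) (hcC : ∀ p, c p ∈ C)
    (h2 : ∀ (p : Lam I) (a : I), c p ≤ c (Lam.ext p a false) ⊔ c (Lam.ext p a true))
    (J : Set L) (hJ : IsIdealIn C J) (g : Function.End α) (hg : g ∈ Fmon f c J) :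
    ∃ P : List (Lam I), Reduced P ∧ (∀ q ∈ P, c q ∈ J) ∧
      permEndHom α ((P.map f).prod) = g := by
  obtain ⟨l, hl, rfl⟩ := Submonoid.exists_list_of_mem_closure hg
  clear hg
  have : ∃ P : List (Lam I), (∀ q ∈ P, c q ∈ J) ∧
      permEndHom α ((P.map f).prod) = l.prod := by
    induction l with
    | nil => exact ⟨[], by simp, by simp⟩
    | cons a l ihl =>
      obtain ⟨P, hPJ, hPprod⟩ := ihl (fun y hy => hl y (List.mem_cons_of_mem a hy))
      obtain ⟨p, hp, rfl⟩ := hl a (List.mem_cons_self (a := a) (l := l))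
      refine ⟨p :: P, ?_, ?_⟩
      · intro q hq
        rcases List.mem_cons.mp hq with rfl | hq
        · exact hp
        · exact hPJ q hq
      · simp only [List.map_cons, List.prod_cons, map_mul, hPprod]
        rfl
  obtain ⟨P, hPJ, hPprod⟩ := this
  obtain ⟨Q, hQred, hQJ, hQprod⟩ :=
    exists_reduced f hf1 hf2 C c hcC h2 J hJ P.length P rfl hPJ
  exact ⟨Q, hQred, hQJ, by rw [hQprod, hPprod]⟩

/-- given a `κ`-ICE `f` on an infinite `λ` (`κ = 2 ^ #λ`) and an enumeration `c`
of the nonbottom compact elements `C` of a complete algebraic lattice `L` with properties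
(1)–(3), for every nonempty family of ideals `J u` of `(C, ∨)` the intersection of the
submonoids `F(J u)` is `F(⋂_u J u)`. -/
theorem sInf_Fmon (α : Type u) [Infinite α] (I : Type u)
    (hI : Cardinal.mk I = 2 ^ Cardinal.mk α)
    (f : Lam I → Equiv.Perm α)
    (hf1 : ∀ (p : Lam I) (a : I), f p = f (Lam.ext p a false) * f (Lam.ext p a true))
    (hf2 : ∀ p q : Lam I, f p * f q = f q * f p)
    (hf3 : ∀ P Q : List (Lam I), Reduced P → Reduced Q → ¬ P.Perm Q →
      (P.map f).prod ≠ (Q.map f).prod)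
    (L : Type v) [CompleteLattice L]
    (halg : ∀ x : L, sSup {d : L | IsCompactElement d ∧ d ≤ x} = x)
    (C : Set L) (hC : C = {x : L | IsCompactElement x ∧ x ≠ ⊥})
    (c : Lam I → L)
    (hcC : ∀ p, c p ∈ C) (hcsurj : ∀ x ∈ C, ∃ p, c p = x)
    (h1 : ∀ x ∈ C, ∃ a : I, c ⟨[(a, false)], by simp⟩ = x)
    (h2 : ∀ (p : Lam I) (a : I), c p ≤ c (Lam.ext p a false) ⊔ c (Lam.ext p a true))
    (h3 : ∀ p : Lam I, ∀ d ∈ C, ∀ d' ∈ C, c p ≤ d ⊔ d' →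
      ∃ a : I, d = c (Lam.ext p a false) ∧ d' = c (Lam.ext p a true))
    (U : Type w) [Nonempty U] (J : U → Set L) (hJ : ∀ u, IsIdealIn C (J u)) :
    (⨅ u, Fmon f c (J u)) = Fmon f c (⋂ u, J u) := by
  apply le_antisymm
  · intro g hg
    have hgu : ∀ u, g ∈ Fmon f c (J u) := fun u => Submonoid.mem_iInf.mp hg u
    obtain ⟨u₀⟩ := ‹Nonempty U›
    obtain ⟨P₀, hP₀red, hP₀J, hP₀prod⟩ :=
      exists_reduced_of_mem_Fmon f hf1 hf2 C c hcC h2 (J u₀) (hJ u₀) g (hgu u₀)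
    have hmemAll : ∀ q ∈ P₀, c q ∈ ⋂ u, J u := by
      intro q hq
      rw [Set.mem_iInter]
      intro u
      obtain ⟨P, hPred, hPJ, hPprod⟩ :=
        exists_reduced_of_mem_Fmon f hf1 hf2 C c hcC h2 (J u) (hJ u) g (hgu u)
      have hprodeq : (P₀.map f).prod = (P.map f).prod :=
        permEndHom_injective α (hP₀prod.trans hPprod.symm)
      have hperm : P₀.Perm P := by
        by_contra hne
        exact hf3 P₀ P hP₀red hPred hne hprodeq
      exact hPJ q (hperm.mem_iff.mp hq)
    rw [← hP₀prod]
    have : (P₀.map f).prod ∈ ((Fmon f c (⋂ u, J u)).comap (permEndHom α)) := by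
      apply Submonoid.list_prod_mem
      intro x hx
      obtain ⟨q, hq, rfl⟩ := List.mem_map.mp hx
      exact Submonoid.subset_closure ⟨q, hmemAll q hq, rfl⟩
    exact this
  · apply le_iInf
    intro u
    apply Submonoid.closure_mono
    rintro g ⟨p, hp, rfl⟩
    exact ⟨p, Set.mem_iInter.mp hp u, rfl⟩
end

section
/- Let κ be an infinite cardinal and let L be a complete algebraic lattice with at most κ compact elements, and let C be the set of compact elements of L other than the smallest element (assume C is nonempty). Then there exists a surjective enumeration c : Λ_κ → C (possibly with repetitions) such that: (1) every element of C equals c_{(⟨α⟩,⟨0⟩)} for some α < κ; (2) for all (η,φ) ∈ Λ_κ and all α < κ, c_{(η,φ)} ≤ c_{(η*α, φ*0)} ∨ c_{(η*α, φ*1)}; (3) for all (η,φ) ∈ Λ_κ and all d, d' ∈ C with c_{(η,φ)} ≤ d ∨ d', there exists α < κ such that d = c_{(η*α, φ*0)} and d' = c_{(η*α, φ*1)}. -/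
/-- Auxiliary recursion on reversed lists. -/
noncomputable def goAux {I L : Type u} [CompleteLattice L] (e : I → L) (g : L → I → L × L) :
    List (I × Bool) → L
  | [] => ⊥
  | [(a, _)] => e a
  | (a, b) :: q :: rest =>
      if b then (g (goAux e g (q :: rest)) a).2 else (g (goAux e g (q :: rest)) a).1

theorem goAux_cons {I L : Type u} [CompleteLattice L] (e : I → L) (g : L → I → L × L)
    (a : I) (b : Bool) (l : List (I × Bool)) (hl : l ≠ []) :
    goAux e g ((a, b) :: l) =
      if b then (g (goAux e g l) a).2 else (g (goAux e g l) a).1 := by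
  cases l with
  | nil => exact absurd rfl hl
  | cons q rest => rfl

/-- let `κ` be an infinite cardinal (the cardinality of `ι`), let `L` be a
complete algebraic lattice with at most `κ` compact elements, and let `C` be the (nonempty) set
of compact elements of `L` other than `⊥`. Then there is a surjective enumeration
`c : Λ_κ → C`, possibly with repetitions, such that: (1) every element of `C` equals
`c (⟨a⟩, ⟨0⟩)` for some `a`; (2) `c (η,φ) ≤ c (η*a, φ*0) ⊔ c (η*a, φ*1)` always; and (3)
whenever `c (η,φ) ≤ d ⊔ d'` with `d, d' ∈ C`, there is `a` with `d = c (η*a, φ*0)` and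
`d' = c (η*a, φ*1)`. -/
theorem exists_enumeration (ι : Type u) [Infinite ι] (L : Type u) [CompleteLattice L]
    (halg : ∀ x : L, sSup {d : L | CompleteLattice.IsCompactElement d ∧ d ≤ x} = x)
    (hcard : Cardinal.mk {x : L // CompleteLattice.IsCompactElement x} ≤ Cardinal.mk ι)
    (C : Set L) (hC : C = {x : L | CompleteLattice.IsCompactElement x ∧ x ≠ ⊥})
    (hne : C.Nonempty) :
    ∃ c : Lam ι → L,
      (∀ p, c p ∈ C) ∧ (∀ x ∈ C, ∃ p, c p = x) ∧
      (∀ x ∈ C, ∃ a : ι, c ⟨[(a, false)], by simp⟩ = x) ∧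
      (∀ (p : Lam ι) (a : ι), c p ≤ c (Lam.ext p a false) ⊔ c (Lam.ext p a true)) ∧
      (∀ p : Lam ι, ∀ d ∈ C, ∀ d' ∈ C, c p ≤ d ⊔ d' →
        ∃ a : ι, d = c (Lam.ext p a false) ∧ d' = c (Lam.ext p a true)) := by
  classical
  -- cardinality of C
  have hCι : Cardinal.mk C ≤ Cardinal.mk ι := by
    refine le_trans ?_ hcard
    have hsub : ∀ x ∈ C, CompleteLattice.IsCompactElement x := by
      rw [hC]; intro x hx; exact hx.1
    refine Cardinal.mk_le_of_injective (f := fun x : C => (⟨x.1, hsub x.1 x.2⟩ :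
      {x : L // CompleteLattice.IsCompactElement x})) ?_
    intro x y h
    exact Subtype.ext (congrArg Subtype.val h :)
  -- a surjection e : ι → C
  obtain ⟨eC, heC⟩ : ∃ e : ι → C, Function.Surjective e := by
    have : Nonempty C := hne.to_subtype
    obtain ⟨f⟩ := Cardinal.le_def _ _ |>.mp hCι
    exact ⟨Function.invFun f, Function.invFun_surjective f.injective⟩
  set e : ι → L := fun a => (eC a).1 with he
  have heC' : ∀ a, e a ∈ C := fun a => (eC a).2
  -- for each x ∈ C a surjection onto pairs
  have hg : ∀ x : L, x ∈ C → ∃ gx : ι → L × L,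
      (∀ a, (gx a).1 ∈ C ∧ (gx a).2 ∈ C ∧ x ≤ (gx a).1 ⊔ (gx a).2) ∧
      (∀ d d', d ∈ C → d' ∈ C → x ≤ d ⊔ d' → ∃ a, gx a = (d, d')) := by
    intro x hx
    set S : Set (L × L) := {q | q.1 ∈ C ∧ q.2 ∈ C ∧ x ≤ q.1 ⊔ q.2} with hS
    have hSne : S.Nonempty := ⟨(x, x), hx, hx, le_sup_left⟩
    have hSι : Cardinal.mk S ≤ Cardinal.mk ι := by
      have h1 : Cardinal.mk S ≤ Cardinal.mk (C × C) := by
        refine Cardinal.mk_le_of_injective (f := fun q : S =>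
          ((⟨q.1.1, q.2.1⟩ : C), (⟨q.1.2, q.2.2.1⟩ : C))) ?_
        intro q r h
        apply Subtype.ext
        have h1 := congrArg (fun z => (z.1 : L)) h
        have h2 := congrArg (fun z => (z.2 : L)) h
        exact Prod.ext h1 h2
      have h2 : Cardinal.mk (C × C) ≤ Cardinal.mk ι := by
        simp only [Cardinal.mk_prod, Cardinal.lift_id]
        calc Cardinal.mk C * Cardinal.mk C ≤ Cardinal.mk ι * Cardinal.mk ι :=
              mul_le_mul' hCι hCι
          _ = Cardinal.mk ι := Cardinal.mul_eq_self (Cardinal.aleph0_le_mk ι)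
      exact h1.trans h2
    have : Nonempty S := hSne.to_subtype
    obtain ⟨f⟩ := Cardinal.le_def _ _ |>.mp hSι
    refine ⟨fun a => (Function.invFun f a : S).1, ?_, ?_⟩
    · intro a
      exact (Function.invFun f a).2
    · intro d d' hd hd' hle
      obtain ⟨a, ha⟩ := Function.invFun_surjective f.injective ⟨(d, d'), hd, hd', hle⟩
      exact ⟨a, congrArg Subtype.val ha⟩
  choose G hG1 hG2 using hg
  set g : L → ι → L × L := fun x => if h : x ∈ C then G x h else fun _ => (⊥, ⊥) with hgdef
  have hg1 : ∀ x (hx : x ∈ C) a, (g x a).1 ∈ C ∧ (g x a).2 ∈ C ∧ x ≤ (g x a).1 ⊔ (g x a).2 := by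
    intro x hx a; simp only [hgdef, dif_pos hx]; exact hG1 x hx a
  have hg2 : ∀ x (hx : x ∈ C) d d', d ∈ C → d' ∈ C → x ≤ d ⊔ d' → ∃ a, g x a = (d, d') := by
    intro x hx d d' hd hd' hle; simp only [hgdef, dif_pos hx]; exact hG2 x hx d d' hd hd' hle
  -- the enumeration
  set c : Lam ι → L := fun p => goAux e g p.val.reverse with hc
  have hrev : ∀ (p : Lam ι) (a : ι) (b : Bool),
      c (Lam.ext p a b) = if b then (g (c p) a).2 else (g (c p) a).1 := by
    intro p a b
    have hne' : p.val.reverse ≠ [] := by simp [p.2]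
    simp only [hc, Lam.ext, List.reverse_append, List.reverse_cons, List.reverse_nil,
      List.nil_append, List.singleton_append]
    exact goAux_cons e g a b p.val.reverse hne'
  -- all values in C
  have hmem : ∀ p : Lam ι, c p ∈ C := by
    intro p
    obtain ⟨l, hl⟩ := p
    induction l using List.reverseRecOn with
    | nil => exact absurd rfl hl
    | append_singleton l q ih =>
      cases l with
      | nil =>
        obtain ⟨a, b⟩ := q
        simp only [hc, List.nil_append, List.reverse_cons, List.reverse_nil, List.nil_append]
        show goAux e g [(a, b)] ∈ C
        exact heC' a
      | cons r rest =>
        obtain ⟨a, b⟩ := q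
        have hl' : r :: rest ≠ [] := by simp
        have := hrev ⟨r :: rest, hl'⟩ a b
        show c (Lam.ext ⟨r :: rest, hl'⟩ a b) ∈ C
        rw [this]
        have hx := ih hl'
        cases b with
        | false => exact (hg1 _ hx a).1
        | true => exact (hg1 _ hx a).2.1
  refine ⟨c, hmem, ?_, ?_, ?_, ?_⟩
  · -- surjectivity
    intro x hx
    obtain ⟨a, ha⟩ := heC ⟨x, hx⟩
    exact ⟨⟨[(a, false)], by simp⟩, congrArg Subtype.val ha⟩
  · -- base case surjectivity
    intro x hx
    obtain ⟨a, ha⟩ := heC ⟨x, hx⟩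
    exact ⟨a, congrArg Subtype.val ha⟩
  · -- condition (2)
    intro p a
    rw [hrev p a false, hrev p a true]
    simpa using (hg1 (c p) (hmem p) a).2.2
  · -- condition (3)
    intro p d hd d' hd' hle
    obtain ⟨a, ha⟩ := hg2 (c p) (hmem p) d d' hd hd' hle
    refine ⟨a, ?_, ?_⟩
    · rw [hrev p a false, if_neg (by simp), ha]
    · rw [hrev p a true, if_pos rfl, ha]
end
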